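/- arXiv:1108.0692 — 5 statements merged into one kernel-verified Lean document; each statement's English description precedes it below -/
import Mathlib

section
/- Let G be a group and A an abelian normal subgroup of G. Let t, u ∈ G with tu = ut, and let a, b ∈ A. Then for every c ≥ 1, the Malcev words satisfy β_c(ta, ub)⁻¹ · α_c(ta, ub) = a^{f_c(u,t)} · b^{−f_c(t,u)}, where f_c is evaluated at the conjugation automorphisms induced by t and u on A. -/
/-- Malcev word pair `(α_c, β_c)`. -/
def malcevPair {G : Type*} [Monoid G] (c : ℕ) (x y : G) : G × G :=
  Nat.rec (x, y) (fun _ p => (p.1 * p.2, p.2 * p.1)) c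

/-- The Malcev word `α_c(x,y)`. -/
def malcevAlpha {G : Type*} [Monoid G] (c : ℕ) (x y : G) : G := (malcevPair c x y).1

/-- The Malcev word `β_c(x,y)`. -/
def malcevBeta {G : Type*} [Monoid G] (c : ℕ) (x y : G) : G := (malcevPair c x y).2

/-- The evaluation of `f_c(X,Y) = (X-1)·∏_{i=0}^{c-2}(X^{2^i}Y^{2^i}-1)` at two
elements of a (possibly noncommutative) ring. -/
def fEval {R : Type*} [Ring R] (c : ℕ) (t u : R) : R :=
  (t - 1) * ((List.range (c - 1)).map fun i => t ^ 2 ^ i * u ^ 2 ^ i - 1).prod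

/-- The endomorphism of the abelian normal subgroup `A` (written additively)
induced by conjugation by `t`, i.e. `a ↦ a^t = t⁻¹ * a * t`. -/
def conjEnd {G : Type*} [Group G] (A : Subgroup G) [hN : A.Normal] [IsMulCommutative A]
    (t : G) : AddMonoid.End (Additive A) :=
  AddMonoidHom.mk'
    (fun a => Additive.ofMul (⟨t⁻¹ * ((Additive.toMul a : A) : G) * t, by
      simpa using hN.conj_mem _ (Additive.toMul a).2 t⁻¹⟩ : A))
    (fun a b => congrArg Additive.ofMul (Subtype.ext (by
      show t⁻¹ * ((Additive.toMul a * Additive.toMul b : A) : G) * t = _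
      simp only [toMul_ofMul, Subgroup.coe_mul]
      group)))

open scoped IsMulCommutative

section Aux

variable {G : Type*} [Group G] (A : Subgroup G) [A.Normal] [IsMulCommutative A]

lemma conjEnd_apply (t : G) (p : Additive A) :
    ((Additive.toMul (conjEnd A t p) : A) : G) = t⁻¹ * ((Additive.toMul p : A) : G) * t := rfl

lemma conjEnd_mul (g h : G) : conjEnd A (g * h) = conjEnd A h * conjEnd A g := by
  refine AddMonoidHom.ext fun p => ?_
  refine congrArg Additive.ofMul (Subtype.ext ?_)
  show (g*h)⁻¹ * _ * (g*h) = h⁻¹ * (g⁻¹ * _ * g) * h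
  group

lemma conjEnd_pow (g : G) (n : ℕ) : conjEnd A (g ^ n) = (conjEnd A g) ^ n := by
  induction n with
  | zero =>
    refine AddMonoidHom.ext fun p => ?_
    refine Additive.toMul.injective (Subtype.ext ?_)
    show (g ^ 0)⁻¹ * ((Additive.toMul p : A) : G) * g ^ 0
        = ((Additive.toMul ((1 : AddMonoid.End (Additive A)) p) : A) : G)
    simp
  | succ n ih =>
    rw [pow_succ, conjEnd_mul, ih, pow_succ']

lemma malcevAlpha_succ' {H : Type*} [Monoid H] (c : ℕ) (x y : H) :
    malcevAlpha (c+1) x y = malcevAlpha c x y * malcevBeta c x y := rfl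

lemma malcevBeta_succ' {H : Type*} [Monoid H] (c : ℕ) (x y : H) :
    malcevBeta (c+1) x y = malcevBeta c x y * malcevAlpha c x y := rfl

lemma tu_comm (t u : G) (htu : t * u = u * t) :
    Commute (conjEnd A t) (conjEnd A u) := by
  have h1 := conjEnd_mul A t u
  have h2 := conjEnd_mul A u t
  rw [htu] at h1
  exact h2.symm.trans h1

omit [A.Normal] in
lemma factor_comm (z : AddMonoid.End (Additive A)) (i j : ℕ) :
    Commute (z ^ 2 ^ i - 1) (z ^ 2 ^ j - 1) :=
  (((Commute.refl z).pow_pow _ _).sub_right (Commute.one_right _)).sub_left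
    ((Commute.one_left _).sub_right (Commute.one_right _))

end Aux

lemma end_sub_apply {M : Type*} [AddCommGroup M] (f g : AddMonoid.End M) (x : M) :
    (f - g) x = f x - g x := rfl

lemma end_add_apply {M : Type*} [AddCommGroup M] (f g : AddMonoid.End M) (x : M) :
    (f + g) x = f x + g x := rfl

lemma end_mul_apply {M : Type*} [AddCommGroup M] (f g : AddMonoid.End M) (x : M) :
    (f * g) x = f (g x) := rfl

lemma end_neg_apply {M : Type*} [AddCommGroup M] (f : AddMonoid.End M) (x : M) :
    (-f) x = -(f x) := rfl

lemma malcev_key {G : Type*} [Group G] (A : Subgroup G) [A.Normal] [IsMulCommutative A]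
    (t u : G) (htu : t * u = u * t) (a b : A) (n : ℕ) :
    ∃ p q : Additive A,
      malcevAlpha (n+1) (t * (a : G)) (u * (b : G))
          = (t*u)^(2^n) * ((Additive.toMul p : A) : G) ∧
      malcevBeta (n+1) (t * (a : G)) (u * (b : G))
          = (t*u)^(2^n) * ((Additive.toMul q : A) : G) ∧
      p - q = (((List.range n).map fun i =>
            (conjEnd A t * conjEnd A u) ^ (2^i) - 1).prod : AddMonoid.End (Additive A))
          ((conjEnd A u - 1) (Additive.ofMul a) - (conjEnd A t - 1) (Additive.ofMul b)) := by
  induction n with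
  | zero =>
    refine ⟨conjEnd A u (Additive.ofMul a) + Additive.ofMul b,
      conjEnd A t (Additive.ofMul b) + Additive.ofMul a, ?_, ?_, ?_⟩
    · show (t * (a:G)) * (u * (b:G)) = _
      rw [toMul_add]
      push_cast
      rw [conjEnd_apply]
      simp only [toMul_ofMul, pow_one, pow_zero]
      group
    · show (u * (b:G)) * (t * (a:G)) = _
      rw [toMul_add]
      push_cast
      rw [conjEnd_apply]
      simp only [toMul_ofMul, pow_one, pow_zero]
      rw [htu]
      group
    · simp only [List.range_zero, List.map_nil, List.prod_nil, end_sub_apply,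
        AddMonoid.End.one_apply]
      abel
  | succ n ih =>
    obtain ⟨p, q, hα, hβ, hpq⟩ := ih
    set W : G := (t*u)^(2^n) with hW
    refine ⟨conjEnd A W p + q, conjEnd A W q + p, ?_, ?_, ?_⟩
    · rw [malcevAlpha_succ', hα, hβ, toMul_add]
      push_cast
      rw [conjEnd_apply]
      rw [show (t*u)^(2^(n+1)) = W * W by rw [hW, ← pow_add, pow_succ, mul_two]]
      group
    · rw [malcevBeta_succ', hα, hβ, toMul_add]
      push_cast
      rw [conjEnd_apply]
      rw [show (t*u)^(2^(n+1)) = W * W by rw [hW, ← pow_add, pow_succ, mul_two]]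
      group
    · have hz : conjEnd A W = (conjEnd A t * conjEnd A u) ^ (2^n) := by
        rw [hW, conjEnd_pow, conjEnd_mul, (tu_comm A t u htu).eq]
      have hlist : (((List.range (n+1)).map fun i =>
            (conjEnd A t * conjEnd A u) ^ (2^i) - 1).prod)
          = ((conjEnd A t * conjEnd A u) ^ (2^n) - 1) *
            (((List.range n).map fun i => (conjEnd A t * conjEnd A u) ^ (2^i) - 1).prod) := by
        rw [List.range_succ, List.map_append, List.prod_append]
        simp only [List.map_cons, List.map_nil, List.prod_cons, List.prod_nil, mul_one]
        refine ((Commute.list_prod_right _ _ ?_).eq).symm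
        intro y hy
        simp only [List.mem_map, List.mem_range] at hy
        obtain ⟨i, _, rfl⟩ := hy
        exact factor_comm A _ n i
      rw [hlist]
      have : conjEnd A W p + q - (conjEnd A W q + p) = (conjEnd A W) (p - q) - (p - q) := by
        rw [map_sub]; abel
      rw [this, hpq, hz]
      simp only [end_mul_apply, end_sub_apply, AddMonoid.End.one_apply]

open scoped IsMulCommutative

theorem malcev_word_substitution_formula
    {G : Type*} [Group G] (A : Subgroup G) [A.Normal] [IsMulCommutative A]
    (t u : G) (htu : t * u = u * t) (a b : A) (c : ℕ) (hc : 1 ≤ c) :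
    (malcevBeta c (t * (a : G)) (u * (b : G)))⁻¹ * malcevAlpha c (t * (a : G)) (u * (b : G)) =
      ((Additive.toMul (fEval c (conjEnd A u) (conjEnd A t) (Additive.ofMul a)) : A) : G) *
          ((Additive.toMul ((-fEval c (conjEnd A t) (conjEnd A u)) (Additive.ofMul b)) : A) : G) := by
  obtain ⟨n, rfl⟩ : ∃ n, c = n + 1 := ⟨c - 1, (Nat.succ_pred_eq_of_pos hc).symm⟩
  obtain ⟨p, q, hα, hβ, hpq⟩ := malcev_key A t u htu a b n
  set T := conjEnd A t with hT
  set U := conjEnd A u with hU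
  have hcomm : Commute T U := tu_comm A t u htu
  set P : AddMonoid.End (Additive A) :=
    (((List.range n).map fun i => (T * U) ^ (2^i) - 1).prod) with hP
  have hfac : ∀ (i : ℕ), U ^ 2 ^ i * T ^ 2 ^ i = (T * U) ^ 2 ^ i := fun i => by
    rw [hcomm.eq, hcomm.symm.mul_pow]
  have hfac' : ∀ (i : ℕ), T ^ 2 ^ i * U ^ 2 ^ i = (T * U) ^ 2 ^ i := fun i => by
    rw [hcomm.mul_pow]
  have hfUT : fEval (n+1) U T = (U - 1) * P := by
    unfold fEval
    simp only [Nat.add_sub_cancel, hfac, hP]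
  have hfTU : fEval (n+1) T U = (T - 1) * P := by
    unfold fEval
    simp only [Nat.add_sub_cancel, hfac', hP]
  have hPfactor : ∀ x ∈ (List.range n).map fun i => (T * U) ^ (2^i) - 1,
      ∀ w : AddMonoid.End (Additive A), Commute w (T*U) → Commute w x := by
    intro x hx w hw
    simp only [List.mem_map, List.mem_range] at hx
    obtain ⟨i, _, rfl⟩ := hx
    exact (hw.pow_right _).sub_right (Commute.one_right _)
  have hUP : Commute (U - 1) P :=
    Commute.list_prod_right _ _ fun x hx =>
      ((hPfactor x hx U (hcomm.symm.mul_right (Commute.refl U))).sub_left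
        (hPfactor x hx 1 (Commute.one_left _)))
  have hTP : Commute (T - 1) P :=
    Commute.list_prod_right _ _ fun x hx =>
      ((hPfactor x hx T ((Commute.refl T).mul_right hcomm)).sub_left
        (hPfactor x hx 1 (Commute.one_left _)))
  have hv : p - q = fEval (n+1) U T (Additive.ofMul a) - fEval (n+1) T U (Additive.ofMul b) := by
    rw [hpq, hfUT, hfTU, hUP.eq, hTP.eq, map_sub, end_mul_apply, end_mul_apply]
  have hL : (malcevBeta (n+1) (t * (a : G)) (u * (b : G)))⁻¹ *
      malcevAlpha (n+1) (t * (a : G)) (u * (b : G))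
      = (((Additive.toMul q)⁻¹ * Additive.toMul p : A) : G) := by
    rw [hα, hβ]
    push_cast
    group
  rw [hL]
  have : ((Additive.toMul q)⁻¹ * Additive.toMul p : A) =
      Additive.toMul (fEval (n+1) U T (Additive.ofMul a)) *
        Additive.toMul ((-fEval (n+1) T U) (Additive.ofMul b)) := by
    rw [end_neg_apply, ← toMul_add, ← sub_eq_add_neg, ← hv, toMul_sub, div_eq_mul_inv, mul_comm]
  rw [this]
  push_cast
  ring_nf
end

section
/- Let G be a nilpotent group of class at most k, let A be a torsion-free abelian normal subgroup of G, and let φ be the automorphism of A induced by conjugation by some element of G. Then for every polynomial j(X) ∈ ℤ[X] coprime to X − 1 in ℚ[X], the endomorphism j(φ) of A is injective. -/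
open Polynomial

open scoped IsMulCommutative

/-- A monoid is torsion-free if no nontrivial elements have finite order
(the definition `Monoid.IsTorsionFree` of the older Mathlib, since removed). -/
def Monoid.IsTorsionFree (G : Type*) [Monoid G] : Prop :=
  ∀ g : G, g ≠ 1 → ¬IsOfFinOrder g

theorem aeval_conjEnd_injective_of_coprime
    {G : Type*} [Group G] (k : ℕ) (hG : upperCentralSeries G k = ⊤)
    (A : Subgroup G) [A.Normal] [IsMulCommutative A]
    (hA : Monoid.IsTorsionFree A) (g : G)
    (j : Polynomial ℤ)
    (hj : IsCoprime (j.map (Int.castRingHom ℚ)) (Polynomial.X - 1)) :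
    Function.Injective (Polynomial.aeval (conjEnd A g) j) := by
  set φ := conjEnd A g with hφ
  set n : ℤ := j.eval 1 with hn
  -- `n ≠ 0` by coprimality with `X - 1`
  have hn0 : n ≠ 0 := by
    intro h
    have hroot : (j.map (Int.castRingHom ℚ)).IsRoot 1 := by
      simp [Polynomial.IsRoot, Polynomial.eval_map, Polynomial.eval₂_at_one, ← hn, h]
    have hdvd : (X - 1 : ℚ[X]) ∣ j.map (Int.castRingHom ℚ) := by
      simpa using Polynomial.dvd_iff_isRoot.mpr hroot
    have hu := hj.isUnit_of_dvd' hdvd dvd_rfl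
    exact Polynomial.not_isUnit_X_sub_C (1 : ℚ) (by simpa using hu)
  -- write `j = (X - 1) * q + n`
  obtain ⟨q, hq⟩ := Polynomial.X_sub_C_dvd_sub_C_eval (a := (1 : ℤ)) (p := j)
  have hjq : j = (X - C 1) * q + C n := by rw [hn]; linear_combination hq
  -- the commutator map `ψ = φ - 1`, computed explicitly
  have hsub : ∀ a : Additive A, (((Additive.toMul ((φ - 1) a) : A)) : G)
      = g⁻¹ * ((Additive.toMul a : A) : G) * g * ((Additive.toMul a : A) : G)⁻¹ := by
    intro a
    have h1 : (φ - 1) a = φ a - a := by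
      rfl
    rw [h1, toMul_sub]
    simp only [hφ, conjEnd, AddMonoidHom.mk'_apply, toMul_ofMul, div_eq_mul_inv]
    rfl
  -- iterated commutators descend the upper central series
  have hpow : ∀ m : ℕ, ∀ a : Additive A,
      ((Additive.toMul a : A) : G) ∈ upperCentralSeries G m → ((φ - 1) ^ m) a = 0 := by
    intro m
    induction m with
    | zero =>
      intro a ha
      rw [show upperCentralSeries G 0 = ⊥ from rfl, Subgroup.mem_bot] at ha
      have h1 : (Additive.toMul a : A) = 1 := Subtype.ext (by simpa using ha)
      have h2 : a = 0 := toMul_eq_one.mp h1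
      simpa [h2] using congrArg (fun f => f a) (pow_zero (φ - 1))
    | succ m ih =>
      intro a ha
      have hstep : ((φ - 1) ^ (m + 1)) a = ((φ - 1) ^ m) ((φ - 1) a) := by
        rw [pow_succ]; rfl
      rw [hstep]
      apply ih
      rw [hsub a]
      have h1 := mem_upperCentralSeries_succ_iff.mp ha g⁻¹
      have h2 := (upperCentralSeries G m).inv_mem h1
      convert h2 using 1
      group
  -- decompose the evaluated polynomial
  have hJ : (Polynomial.aeval φ j : AddMonoid.End (Additive A))
      = (φ - 1) * Polynomial.aeval φ q + ((n : ℤ) : AddMonoid.End (Additive A)) := by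
    conv_lhs => rw [hjq]
    simp [map_add, map_mul, map_sub, algebraMap_int_eq, eq_intCast]
  set S : AddMonoid.End (Additive A) := (φ - 1) * Polynomial.aeval φ q with hS
  rw [injective_iff_map_eq_zero]
  intro a ha0
  have hna : n • a = -(S a) := by
    have h1 : (Polynomial.aeval φ j) a = S a + n • a := by
      rw [hJ]
      rfl
    rw [ha0] at h1
    have h2 : n • a + S a = 0 := by rw [add_comm]; exact h1.symm
    exact eq_neg_of_add_eq_zero_left h2
  have hiter : ∀ m : ℕ, (n ^ m) • a = ((-1 : ℤ) ^ m) • ((S ^ m) a) := by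
    intro m
    induction m with
    | zero => simp [AddMonoid.End.one_apply]
    | succ m ih =>
      have hSm : (S ^ (m + 1)) a = (S ^ m) (S a) := by rw [pow_succ]; rfl
      calc (n ^ (m + 1)) • a = n • ((n ^ m) • a) := by
            rw [pow_succ, mul_comm, mul_smul]
        _ = n • (((-1 : ℤ) ^ m) • ((S ^ m) a)) := by rw [ih]
        _ = ((-1 : ℤ) ^ m) • (n • ((S ^ m) a)) := smul_comm _ _ _
        _ = ((-1 : ℤ) ^ m) • ((S ^ m) (n • a)) := by rw [map_zsmul]
        _ = ((-1 : ℤ) ^ m) • ((S ^ m) (-(S a))) := by rw [hna]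
        _ = ((-1 : ℤ) ^ (m + 1)) • ((S ^ (m + 1)) a) := by
            rw [map_neg, hSm, pow_succ, mul_smul]
            simp
  have hcomm : Commute (φ - 1) (Polynomial.aeval φ q) := by
    have h1 : φ - 1 = Polynomial.aeval φ ((X : ℤ[X]) - C 1) := by simp [algebraMap_int_eq, eq_intCast]
    rw [h1]
    exact (Commute.all (X - C 1 : ℤ[X]) q).map (Polynomial.aeval φ)
  have hzero : (S ^ k) a = 0 := by
    have h2 : (S ^ k) a = ((φ - 1) ^ k) ((Polynomial.aeval φ q ^ k) a) := by
      rw [hS, hcomm.mul_pow]; rfl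
    rw [h2]
    exact hpow k _ (by rw [hG]; exact Subgroup.mem_top _)
  have hfin : (n ^ k) • a = 0 := by rw [hiter k, hzero, smul_zero]
  by_contra hne
  have h1 : (Additive.toMul a : A) ≠ 1 := fun h => hne (toMul_eq_one.mp h)
  exact hA (Additive.toMul a) h1 (isOfFinOrder_iff_zpow_eq_one.mpr
    ⟨n ^ k, pow_ne_zero k hn0, by rw [← toMul_zsmul, hfin]; rfl⟩)
end

section
/- Let n ≥ c ≥ 3 be integers, let 𝔠 be the monomial ideal of ℚ[X_1, …, X_n] generated by all monomials X_1^{i_1}⋯X_n^{i_n} with i_1 + ⋯ + i_n = c and i_j ≥ 2 for some j, and let e ≥ 1 be an integer. Then ((X_1+1)^e·(X_2+1)^e⋯(X_n+1)^e − 1)^n ≡ e^n·n!·X_1X_2⋯X_n (mod 𝔠). -/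
open MvPolynomial

/-- The monomial ideal of `ℚ[X_1,…,X_n]` generated by all monomials
`X_1^{i_1}⋯X_n^{i_n}` with `i_1+⋯+i_n = c` and `i_j ≥ 2` for some `j`. -/
noncomputable def cIdeal (n c : ℕ) : Ideal (MvPolynomial (Fin n) ℚ) :=
  Ideal.span {m | ∃ d : Fin n → ℕ, (∑ i, d i) = c ∧ (∃ j, 2 ≤ d j) ∧
    m = ∏ i, X i ^ d i}
-- Lemma A, prod version
lemma prodX_mem (n c : ℕ) (hc : 3 ≤ c) :
    ∀ s : ℕ, ∀ d : Fin n → ℕ, (∑ i, d i) = s → c ≤ s → (∃ j, 2 ≤ d j) →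
      (∏ i, (X i : MvPolynomial (Fin n) ℚ) ^ d i) ∈ cIdeal n c := by
  intro s
  induction s using Nat.strong_induction_on with
  | _ s IH =>
    intro d hsum hcs ⟨j, hj⟩
    rcases eq_or_lt_of_le hcs with h | h
    · exact Ideal.subset_span ⟨d, by omega, ⟨j, hj⟩, rfl⟩
    · -- find k to decrement
      have hex : ∃ k, 1 ≤ d k ∧ (2 ≤ d j - (if j = k then 1 else 0)) := by
        by_cases h3 : 3 ≤ d j
        · exact ⟨j, by omega, by simp; omega⟩
        · have hdj : d j = 2 := by omega
          have : ∃ k, k ≠ j ∧ 1 ≤ d k := by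
            by_contra hco
            push_neg at hco
            have : (∑ i, d i) = d j := by
              apply Finset.sum_eq_single_of_mem j (Finset.mem_univ j)
              intro b _ hb
              have := hco b hb
              omega
            omega
          obtain ⟨k, hk, hk1⟩ := this
          refine ⟨k, hk1, ?_⟩
          rw [if_neg (fun h => hk h.symm)]
          omega
      obtain ⟨k, hk1, hk2⟩ := hex
      set d' : Fin n → ℕ := fun i => d i - (if i = k then 1 else 0) with hd'
      have hsum' : (∑ i, d' i) = s - 1 := by
        rw [← hsum]
        rw [← Finset.sum_erase_add _ d' (Finset.mem_univ k),
            ← Finset.sum_erase_add _ d (Finset.mem_univ k)]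
        have : ∑ i ∈ Finset.univ.erase k, d' i = ∑ i ∈ Finset.univ.erase k, d i := by
          apply Finset.sum_congr rfl
          intro x hx
          simp [hd', Finset.ne_of_mem_erase hx]
        rw [this]; simp [hd']
        omega
      have hprod : (∏ i, (X i : MvPolynomial (Fin n) ℚ) ^ d i)
          = X k * ∏ i, (X i : MvPolynomial (Fin n) ℚ) ^ d' i := by
        rw [← Finset.prod_erase_mul _ (fun i => (X i : MvPolynomial (Fin n) ℚ) ^ d' i) (Finset.mem_univ k),
            ← Finset.prod_erase_mul _ (fun i => (X i : MvPolynomial (Fin n) ℚ) ^ d i) (Finset.mem_univ k)]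
        have : ∏ i ∈ Finset.univ.erase k, (X i : MvPolynomial (Fin n) ℚ) ^ d' i
            = ∏ i ∈ Finset.univ.erase k, (X i : MvPolynomial (Fin n) ℚ) ^ d i := by
          apply Finset.prod_congr rfl
          intro x hx
          simp [hd', Finset.ne_of_mem_erase hx]
        rw [this]
        have hdk : d k = (d' k) + 1 := by simp [hd']; omega
        rw [hdk, pow_succ]
        ring
      rw [hprod]
      apply Ideal.mul_mem_left
      apply IH (s-1) (by omega) d' hsum' (by omega)
      refine ⟨j, ?_⟩
      have := hk2
      simp only [hd']
      omega
lemma monomial_mem (n c : ℕ) (hc : 3 ≤ c) (d : Fin n →₀ ℕ) (q : ℚ)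
    (hs : c ≤ ∑ i, d i) (hj : ∃ j, 2 ≤ d j) :
    (monomial d q : MvPolynomial (Fin n) ℚ) ∈ cIdeal n c := by
  have : (monomial d q : MvPolynomial (Fin n) ℚ) = C q * ∏ i, X i ^ d i := by
    rw [monomial_eq]
    congr 1
    exact Finsupp.prod_fintype _ _ (by intro i; exact pow_zero _)
  rw [this]
  exact Ideal.mul_mem_left _ _ (prodX_mem n c hc _ (fun i => d i) rfl hs hj)

lemma mem_of_support (n c : ℕ) (hc : 3 ≤ c) (p : MvPolynomial (Fin n) ℚ)
    (h : ∀ d ∈ p.support, c ≤ (∑ i, d i) ∧ ∃ j, 2 ≤ d j) : p ∈ cIdeal n c := by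
  rw [← p.support_sum_monomial_coeff]
  exact Ideal.sum_mem _ (fun d hd => monomial_mem n c hc d _ (h d hd).1 (h d hd).2)

/-- high-degree membership: everything of total degree `> n` is in the ideal -/
lemma mem_of_highdeg (n c : ℕ) (hc : 3 ≤ c) (hn : c ≤ n) (p : MvPolynomial (Fin n) ℚ)
    (h : ∀ d ∈ p.support, n + 1 ≤ ∑ i, d i) : p ∈ cIdeal n c := by
  apply mem_of_support n c hc
  intro d hd
  have h1 := h d hd
  constructor
  · omega
  · by_contra hco
    push_neg at hco
    have : (∑ i, d i) ≤ ∑ _i : Fin n, 1 := by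
      apply Finset.sum_le_sum
      intro i _
      have := hco i
      omega
    simp at this
    omega
lemma supdeg_mul {n : ℕ} (p q : MvPolynomial (Fin n) ℚ) (a b : ℕ)
    (hp : ∀ d ∈ p.support, a ≤ ∑ i, d i) (hq : ∀ d ∈ q.support, b ≤ ∑ i, d i) :
    ∀ d ∈ (p * q).support, a + b ≤ ∑ i, d i := by
  intro d hd
  have := MvPolynomial.support_mul p q hd
  rw [Finset.mem_add] at this
  obtain ⟨u, hu, v, hv, rfl⟩ := this
  have : (∑ i, (u + v) i) = (∑ i, u i) + ∑ i, v i := by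
    simp [Finsupp.add_apply, Finset.sum_add_distrib]
  rw [this]
  exact Nat.add_le_add (hp u hu) (hq v hv)

lemma supdeg_pow {n : ℕ} (p : MvPolynomial (Fin n) ℚ) (a : ℕ)
    (hp : ∀ d ∈ p.support, a ≤ ∑ i, d i) :
    ∀ m : ℕ, ∀ d ∈ (p ^ m).support, m * a ≤ ∑ i, d i := by
  intro m
  induction m with
  | zero =>
    intro d hd
    simp
  | succ m IH =>
    intro d hd
    rw [pow_succ] at hd
    have := supdeg_mul _ _ (m * a) a IH hp d hd
    have h2 : (m+1) * a = m * a + a := by ring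
    omega

lemma supdeg_S {n : ℕ} : ∀ d ∈ (∑ i, (X i : MvPolynomial (Fin n) ℚ)).support, 1 ≤ ∑ i, d i := by
  intro d hd
  by_contra hco
  have hd0 : d = 0 := by
    ext i
    have : (∑ i, d i) = 0 := by omega
    exact Finset.sum_eq_zero_iff.mp this i (Finset.mem_univ i)
  rw [MvPolynomial.mem_support_iff, hd0] at hd
  apply hd
  rw [← constantCoeff_eq]
  simp
lemma coeff_single_mul {n : ℕ} (p q : MvPolynomial (Fin n) ℚ) (i : Fin n) :
    coeff (Finsupp.single i 1) (p * q) =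
      coeff (Finsupp.single i 1) p * constantCoeff q
        + constantCoeff p * coeff (Finsupp.single i 1) q := by
  rw [coeff_mul, Finsupp.antidiagonal_single, Finset.sum_map]
  rw [show (Finset.HasAntidiagonal.antidiagonal (1:ℕ)) = {(0,1),(1,0)} from rfl]
  simp [constantCoeff_eq, add_comm]

lemma coeff_single_prod {n : ℕ} (s : Finset (Fin n)) (A : Fin n → MvPolynomial (Fin n) ℚ)
    (hA : ∀ k, constantCoeff (A k) = 1) (i : Fin n) :
    coeff (Finsupp.single i 1) (∏ k ∈ s, A k) = ∑ k ∈ s, coeff (Finsupp.single i 1) (A k) := by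
  induction s using Finset.induction with
  | empty => simp [coeff_one, eq_comm, Finsupp.single_eq_zero]
  | insert a s ha IH =>
    rw [Finset.prod_insert ha, Finset.sum_insert ha, coeff_single_mul, IH, hA]
    have : constantCoeff (∏ k ∈ s, A k) = 1 := by
      rw [map_prod]
      simp [hA]
    rw [this]
    ring

lemma constCoeff_factor {n : ℕ} (k : Fin n) (e : ℕ) :
    constantCoeff (((X k : MvPolynomial (Fin n) ℚ) + 1) ^ e) = 1 := by
  simp

lemma coeff_single_factor {n : ℕ} (k i : Fin n) (e : ℕ) :
    coeff (Finsupp.single i 1) (((X k : MvPolynomial (Fin n) ℚ) + 1) ^ e) =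
      if k = i then (e : ℚ) else 0 := by
  rw [add_pow]
  rw [coeff_sum]
  have hcast : ∀ m : ℕ, ((e.choose m : ℕ) : MvPolynomial (Fin n) ℚ) = C ((e.choose m : ℕ) : ℚ) := by
    intro m; simp
  have hterm : ∀ m ∈ Finset.range (e+1),
      coeff (Finsupp.single i 1) ((X k : MvPolynomial (Fin n) ℚ) ^ m * 1 ^ (e - m) * ((e.choose m : ℕ) : MvPolynomial (Fin n) ℚ))
        = if k = i ∧ m = 1 then (e.choose m : ℚ) else 0 := by
    intro m _
    rw [one_pow, mul_one, hcast, mul_comm, coeff_C_mul, coeff_X_pow]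
    have hiff : (Finsupp.single k m = Finsupp.single i 1) ↔ (k = i ∧ m = 1) := by
      constructor
      · intro h
        have hi := DFunLike.congr_fun h i
        have hk := DFunLike.congr_fun h k
        by_cases hki : k = i
        · subst hki
          simp [Finsupp.single_apply] at hi
          exact ⟨rfl, hi⟩
        · simp [Finsupp.single_apply, hki, Ne.symm hki] at hi
      · rintro ⟨rfl, rfl⟩; rfl
    by_cases h : k = i ∧ m = 1
    · rw [if_pos (hiff.mpr h), if_pos h]; ring
    · rw [if_neg (fun hh => h (hiff.mp hh)), if_neg h, mul_zero]
  rw [Finset.sum_congr rfl hterm]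
  by_cases hki : k = i
  · subst hki
    rw [if_pos rfl]
    have hs : (∑ m ∈ Finset.range (e+1), if k = k ∧ m = 1 then ((e.choose m : ℕ) : ℚ) else 0)
        = if k = k ∧ (1:ℕ) = 1 then ((e.choose 1 : ℕ) : ℚ) else 0 := by
      apply Finset.sum_eq_single 1
      · intro b _ hb; simp [hb]
      · intro h
        have : e = 0 := by
          simp [Finset.mem_range] at h; omega
        simp [this]
    rw [hs]
    simp [Nat.choose_one_right]
  · rw [if_neg hki]
    apply Finset.sum_eq_zero
    intro m _
    simp [hki]
lemma coeff_single_F {n : ℕ} (e : ℕ) (i : Fin n) :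
    coeff (Finsupp.single i 1) (∏ k, ((X k : MvPolynomial (Fin n) ℚ) + 1) ^ e) = (e : ℚ) := by
  rw [coeff_single_prod _ _ (fun k => constCoeff_factor k e) i]
  simp only [coeff_single_factor]
  simp

lemma supdeg_g {n : ℕ} (e : ℕ) :
    ∀ d ∈ ((∏ k, ((X k : MvPolynomial (Fin n) ℚ) + 1) ^ e) - 1
        - (e : MvPolynomial (Fin n) ℚ) * ∑ i, X i).support, 2 ≤ ∑ i, d i := by
  intro d hd
  rw [MvPolynomial.mem_support_iff] at hd
  by_contra hco
  apply hd
  have hcast : ((e:ℕ) : MvPolynomial (Fin n) ℚ) = C ((e:ℕ) : ℚ) := by simp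
  interval_cases hs : (∑ i, d i)
  · -- sum = 0 : d = 0
    have hd0 : d = 0 := by
      ext i
      exact Finset.sum_eq_zero_iff.mp hs i (Finset.mem_univ i)
    subst hd0
    rw [← constantCoeff_eq]
    rw [map_sub, map_sub, map_mul]
    simp
  · -- sum = 1 : d = single i 1
    have hex : ∃ i, d i ≠ 0 := by
      by_contra hco2
      push_neg at hco2
      have : (∑ i, d i) = 0 := Finset.sum_eq_zero (fun i _ => hco2 i)
      omega
    obtain ⟨i, hi⟩ := hex
    have hle : d i ≤ ∑ k, d k := Finset.single_le_sum (fun k _ => Nat.zero_le _) (Finset.mem_univ i)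
    have hdi : d i = 1 := by omega
    have hrest : ∀ k, k ≠ i → d k = 0 := by
      intro k hk
      have hsub : ({i, k} : Finset (Fin n)) ⊆ Finset.univ := Finset.subset_univ _
      have := Finset.sum_le_sum_of_subset hsub (f := d)
      rw [Finset.sum_pair (fun h => hk h.symm)] at this
      omega
    have hdd : d = Finsupp.single i 1 := by
      ext k
      by_cases hk : k = i
      · subst hk; simp [hdi]
      · simp [Finsupp.single_apply, Ne.symm hk, hrest k hk]
    subst hdd
    rw [MvPolynomial.coeff_sub, MvPolynomial.coeff_sub]
    rw [coeff_single_F]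
    rw [hcast, coeff_C_mul]
    have hS : coeff (Finsupp.single i 1) (∑ k, (X k : MvPolynomial (Fin n) ℚ)) = 1 := by
      rw [coeff_sum]
      simp only [coeff_X']
      have : ∀ k : Fin n, (if Finsupp.single k 1 = Finsupp.single i 1 then (1:ℚ) else 0)
          = if k = i then 1 else 0 := by
        intro k
        by_cases hk : k = i
        · subst hk; simp
        · rw [if_neg hk, if_neg]
          intro h
          exact hk (by
            have := DFunLike.congr_fun h i
            by_contra hki
            simp [Finsupp.single_apply, hki] at this)
      simp only [this]
      simp
    rw [hS, coeff_one, if_neg]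
    · ring
    · exact fun h => one_ne_zero (α := ℕ) (by simpa using (DFunLike.congr_fun h i).symm)

lemma prod_X_comp {n : ℕ} (g : Fin n → Fin n) :
    ∏ j, (X (g j) : MvPolynomial (Fin n) ℚ)
      = monomial (∑ j, Finsupp.single (g j) 1) 1 := by
  have : ∀ s : Finset (Fin n), ∏ j ∈ s, (X (g j) : MvPolynomial (Fin n) ℚ)
      = monomial (∑ j ∈ s, Finsupp.single (g j) 1) 1 := by
    intro s
    induction s using Finset.induction with
    | empty => simp
    | insert a s ha IH =>
      rw [Finset.prod_insert ha, Finset.sum_insert ha, IH]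
      rw [X, monomial_mul, mul_one]
  exact this Finset.univ
lemma card_bijections (n : ℕ) :
    (Finset.univ.filter fun g : Fin n → Fin n => Function.Bijective g).card = n.factorial := by
  rw [← Fintype.card_subtype]
  have e : {g : Fin n → Fin n // Function.Bijective g} ≃ Equiv.Perm (Fin n) :=
    { toFun := fun g => Equiv.ofBijective g.1 g.2
      invFun := fun σ => ⟨σ, σ.bijective⟩
      left_inv := fun g => Subtype.ext rfl
      right_inv := fun σ => Equiv.ext fun x => rfl }
  rw [Fintype.card_congr e, Fintype.card_perm, Fintype.card_fin]

lemma Sn_mem (n c : ℕ) (hc : 3 ≤ c) (hn : c ≤ n) :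
    (∑ i, (X i : MvPolynomial (Fin n) ℚ)) ^ n
      - (n.factorial : MvPolynomial (Fin n) ℚ) * ∏ i, X i ∈ cIdeal n c := by
  have hSn : (∑ i, (X i : MvPolynomial (Fin n) ℚ)) ^ n
      = ∑ g : Fin n → Fin n, ∏ j, (X (g j) : MvPolynomial (Fin n) ℚ) := by
    have h1 : (∑ i, (X i : MvPolynomial (Fin n) ℚ)) ^ n
        = ∏ _j : Fin n, (∑ i, (X i : MvPolynomial (Fin n) ℚ)) := by
      rw [Finset.prod_const]
      simp
    rw [h1, Finset.prod_univ_sum]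
    rw [Fintype.piFinset_univ]
  rw [hSn, ← Finset.sum_filter_add_sum_filter_not Finset.univ
      (fun g : Fin n → Fin n => Function.Bijective g)]
  have hbij : ∑ g ∈ Finset.univ.filter (fun g : Fin n → Fin n => Function.Bijective g),
      ∏ j, (X (g j) : MvPolynomial (Fin n) ℚ)
      = (n.factorial : MvPolynomial (Fin n) ℚ) * ∏ i, X i := by
    rw [Finset.sum_congr rfl (fun g hg => ?_), Finset.sum_const, card_bijections,
      nsmul_eq_mul]
    exact Equiv.prod_comp (Equiv.ofBijective g (Finset.mem_filter.mp hg).2) X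
  rw [hbij, add_comm, add_sub_assoc, sub_self, add_zero]
  apply Ideal.sum_mem
  intro g hg
  rw [Finset.mem_filter] at hg
  have hninj : ¬ Function.Injective g := by
    intro hinj
    exact hg.2 (Finite.injective_iff_bijective.mp hinj)
  rw [Function.not_injective_iff] at hninj
  obtain ⟨a, b, hab, hne⟩ := hninj
  rw [prod_X_comp]
  set D : Fin n →₀ ℕ := ∑ j, Finsupp.single (g j) 1 with hD
  have hDi : ∀ i, D i = ∑ j, if g j = i then 1 else 0 := by
    intro i
    rw [hD, Finsupp.finset_sum_apply]
    apply Finset.sum_congr rfl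
    intro j _
    simp [Finsupp.single_apply]
  apply monomial_mem n c hc
  · have : (∑ i, D i) = n := by
      simp only [hDi]
      rw [Finset.sum_comm]
      have : ∀ j : Fin n, (∑ i, if g j = i then (1:ℕ) else 0) = 1 := by
        intro j
        simp [Finset.sum_ite_eq]
      simp [this]
    omega
  · refine ⟨g a, ?_⟩
    rw [hDi (g a)]
    have hsub : ({a, b} : Finset (Fin n)) ⊆ Finset.univ := Finset.subset_univ _
    have hle := Finset.sum_le_sum_of_subset hsub (f := fun j => if g j = g a then 1 else 0)
    rw [Finset.sum_pair hne] at hle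
    simpa [hab.symm] using hle
theorem congruence_mod_cIdeal (n c : ℕ) (hc : 3 ≤ c) (hn : c ≤ n) (e : ℕ) (he : 1 ≤ e) :
    ((∏ i, ((X i : MvPolynomial (Fin n) ℚ) + 1) ^ e) - 1) ^ n -
        (e : MvPolynomial (Fin n) ℚ) ^ n * (n.factorial : MvPolynomial (Fin n) ℚ) * ∏ i, X i ∈
      cIdeal n c := by
  set F := ∏ i, ((X i : MvPolynomial (Fin n) ℚ) + 1) ^ e with hF
  set S := ∑ i, (X i : MvPolynomial (Fin n) ℚ) with hS
  set g := F - 1 - (e : MvPolynomial (Fin n) ℚ) * S with hg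
  have hf : F - 1 = (e : MvPolynomial (Fin n) ℚ) * S + g := by rw [hg]; ring
  have hseS : ∀ d ∈ ((e : MvPolynomial (Fin n) ℚ) * S).support, 1 ≤ ∑ i, d i := by
    intro d hd
    apply supdeg_S
    rw [MvPolynomial.mem_support_iff] at hd ⊢
    intro h
    apply hd
    have hc' : ((e:ℕ) : MvPolynomial (Fin n) ℚ) = C ((e:ℕ) : ℚ) := by simp
    rw [hc', coeff_C_mul, h, mul_zero]
  have hsg : ∀ d ∈ g.support, 2 ≤ ∑ i, d i := supdeg_g e
  have hA : (F - 1) ^ n - ((e : MvPolynomial (Fin n) ℚ) * S) ^ n ∈ cIdeal n c := by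
    rw [hf, add_pow, Finset.sum_range_succ]
    simp only [Nat.sub_self, pow_zero, mul_one, Nat.choose_self, Nat.cast_one]
    rw [add_sub_cancel_right]
    apply Ideal.sum_mem
    intro k hk
    rw [Finset.mem_range] at hk
    apply mem_of_highdeg n c hc hn
    intro d hd
    have h1 := supdeg_pow _ _ hseS k
    have h2 := supdeg_pow _ _ hsg (n - k)
    have h4 := supdeg_mul _ _ (k * 1 + (n - k) * 2) 0
      (supdeg_mul _ _ (k * 1) ((n - k) * 2) h1 h2) (fun d _ => Nat.zero_le _) d hd
    omega
  have hB : ((e : MvPolynomial (Fin n) ℚ) * S) ^ n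
      - (e : MvPolynomial (Fin n) ℚ) ^ n * (n.factorial : MvPolynomial (Fin n) ℚ) * ∏ i, X i
      ∈ cIdeal n c := by
    rw [mul_pow]
    have heq : (e : MvPolynomial (Fin n) ℚ) ^ n * S ^ n
        - (e : MvPolynomial (Fin n) ℚ) ^ n * (n.factorial : MvPolynomial (Fin n) ℚ) * ∏ i, X i
        = (e : MvPolynomial (Fin n) ℚ) ^ n
          * (S ^ n - (n.factorial : MvPolynomial (Fin n) ℚ) * ∏ i, X i) := by ring
    rw [heq]
    exact Ideal.mul_mem_left _ _ (Sn_mem n c hc hn)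
  have hAB := Ideal.add_mem _ hA hB
  rwa [sub_add_sub_cancel] at hAB
end

section
/- Let n ≥ c ≥ 3 be integers, let 𝔠 be the monomial ideal of ℚ[X_1, …, X_n] generated by all monomials X_1^{i_1}⋯X_n^{i_n} with i_1 + ⋯ + i_n = c and i_j ≥ 2 for some j, and let e ≥ 1 be an integer. Then ((X_1+1)^e·(X_2+1)^e⋯(X_n+1)^e − 1)^n ∉ 𝔠. -/
open MvPolynomial

namespace CIdealAux

variable {n : ℕ}

/-- All coefficients nonnegative. -/
def NN (p : MvPolynomial (Fin n) ℚ) : Prop := ∀ d, 0 ≤ coeff d p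

lemma NN.one : NN (1 : MvPolynomial (Fin n) ℚ) := by
  intro d; classical
  rw [coeff_one]; split_ifs <;> norm_num

lemma NN.mul {p q : MvPolynomial (Fin n) ℚ} (hp : NN p) (hq : NN q) : NN (p * q) := by
  intro d; classical
  rw [coeff_mul]
  exact Finset.sum_nonneg fun x _ => mul_nonneg (hp _) (hq _)

set_option maxHeartbeats 1000000 in
lemma coeff_mul_ge {p q : MvPolynomial (Fin n) ℚ} (hp : NN p) (hq : NN q)
    (a b : Fin n →₀ ℕ) : coeff a p * coeff b q ≤ coeff (a + b) (p * q) := by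
  rw [coeff_mul]
  have hmem : (a, b) ∈ Finset.HasAntidiagonal.antidiagonal (a + b) := Finset.HasAntidiagonal.mem_antidiagonal.mpr rfl
  exact Finset.single_le_sum (f := fun x : (Fin n →₀ ℕ) × (Fin n →₀ ℕ) =>
      coeff x.1 p * coeff x.2 q)
    (fun x _ => mul_nonneg (hp _) (hq _)) hmem

lemma NN.prod {ι : Type*} (s : Finset ι) (p : ι → MvPolynomial (Fin n) ℚ)
    (hp : ∀ i, NN (p i)) : NN (∏ i ∈ s, p i) := by
  classical
  induction s using Finset.induction with
  | empty => simpa using NN.one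
  | insert _ _ hx ih =>
    rw [Finset.prod_insert hx]
    exact (hp _).mul ih

lemma coeff_prod_ge {ι : Type*} (s : Finset ι) (p : ι → MvPolynomial (Fin n) ℚ)
    (hp : ∀ i, NN (p i)) (a : ι → (Fin n →₀ ℕ)) :
    (∏ i ∈ s, coeff (a i) (p i)) ≤ coeff (∑ i ∈ s, a i) (∏ i ∈ s, p i) := by
  classical
  induction s using Finset.induction with
  | empty => simp
  | @insert x s hx ih =>
    rw [Finset.prod_insert hx, Finset.sum_insert hx, Finset.prod_insert hx]
    calc coeff (a x) (p x) * ∏ i ∈ s, coeff (a i) (p i)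
        ≤ coeff (a x) (p x) * coeff (∑ i ∈ s, a i) (∏ i ∈ s, p i) :=
          mul_le_mul_of_nonneg_left ih (hp x (a x))
      _ ≤ _ := coeff_mul_ge (hp x) (NN.prod s p hp) _ _

lemma NN.pow {p : MvPolynomial (Fin n) ℚ} (hp : NN p) (k : ℕ) : NN (p ^ k) := by
  induction k with
  | zero => simpa using NN.one
  | succ k ih => rw [pow_succ]; exact ih.mul hp

lemma NN_X_add_one (i : Fin n) : NN ((X i : MvPolynomial (Fin n) ℚ) + 1) := by
  intro d; classical
  rw [coeff_add, coeff_X', coeff_one]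
  split_ifs <;> norm_num

lemma coeff_single_X_add_one (i : Fin n) :
    coeff (Finsupp.single i 1) ((X i : MvPolynomial (Fin n) ℚ) + 1) = 1 := by
  classical
  rw [coeff_add, coeff_X', coeff_one, if_pos rfl, if_neg]
  · norm_num
  · exact fun h => by simpa using h.symm

lemma coeff_zero_X_add_one_pow (i : Fin n) (m : ℕ) :
    coeff 0 (((X i : MvPolynomial (Fin n) ℚ) + 1) ^ m) = 1 := by
  have : (constantCoeff (R := ℚ) (σ := Fin n)) (((X i) + 1) ^ m) = 1 := by
    rw [map_pow, map_add, constantCoeff_X, map_one, zero_add, one_pow]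
  simpa [constantCoeff_eq] using this

lemma one_le_coeff_single_pow (i : Fin n) (e : ℕ) (he : 1 ≤ e) :
    1 ≤ coeff (Finsupp.single i 1) (((X i : MvPolynomial (Fin n) ℚ) + 1) ^ e) := by
  obtain ⟨m, rfl⟩ : ∃ m, e = m + 1 := ⟨e - 1, (Nat.succ_pred_eq_of_pos he).symm⟩
  have h := coeff_mul_ge (p := ((X i : MvPolynomial (Fin n) ℚ) + 1) ^ m)
    (q := (X i : MvPolynomial (Fin n) ℚ) + 1) ((NN_X_add_one i).pow m) (NN_X_add_one i)
    0 (Finsupp.single i 1)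
  rw [coeff_zero_X_add_one_pow, coeff_single_X_add_one, one_mul, zero_add] at h
  rw [pow_succ]
  exact h

end CIdealAux

open CIdealAux in
theorem pow_not_mem_cIdeal (n c : ℕ) (hc : 3 ≤ c) (hn : c ≤ n) (e : ℕ) (he : 1 ≤ e) :
    ((∏ i, ((X i : MvPolynomial (Fin n) ℚ) + 1) ^ e) - 1) ^ n ∉ cIdeal n c := by
  classical
  -- rewrite the ideal as a span of monomials
  have hideal : cIdeal n c = Ideal.span ((fun s => monomial s (1 : ℚ)) ''
      {s : Fin n →₀ ℕ | (∑ i, s i) = c ∧ ∃ j, 2 ≤ s j}) := by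
    unfold cIdeal
    congr 1
    ext m
    constructor
    · rintro ⟨d, hsum, hj, rfl⟩
      refine ⟨Finsupp.equivFunOnFinite.symm d, ⟨by simpa using hsum, by simpa using hj⟩, ?_⟩
      show monomial (Finsupp.equivFunOnFinite.symm d) (1 : ℚ) = _
      rw [monomial_eq, map_one, one_mul, Finsupp.prod_fintype]
      · rfl
      · intro i; exact pow_zero _
    · rintro ⟨s, ⟨hsum, hj⟩, rfl⟩
      refine ⟨fun i => s i, hsum, hj, ?_⟩
      show monomial s (1 : ℚ) = ∏ i, (X i : MvPolynomial (Fin n) ℚ) ^ s i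
      rw [monomial_eq, map_one, one_mul, Finsupp.prod_fintype]
      intro i; exact pow_zero _
  rw [hideal, mem_ideal_span_monomial_image]
  push_neg
  -- the squarefree all-ones monomial
  set one1 : Fin n →₀ ℕ := ∑ i, Finsupp.single i 1 with hone1
  have hone1_apply : ∀ j : Fin n, one1 j = 1 := by
    intro j
    rw [hone1, Finsupp.finset_sum_apply]
    simp [Finsupp.single_apply]
  refine ⟨one1, ?_, ?_⟩
  · -- one1 is in the support
    rw [mem_support_iff]
    set g : MvPolynomial (Fin n) ℚ := ∏ i, ((X i : MvPolynomial (Fin n) ℚ) + 1) ^ e with hg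
    have hNNg : NN g := NN.prod _ _ fun i => (NN_X_add_one i).pow e
    have hNNh : NN (g - 1) := by
      intro d
      rw [coeff_sub, coeff_one]
      split_ifs with h0
      · have : coeff d g = 1 := by
          rw [← h0]
          have : (constantCoeff (R := ℚ) (σ := Fin n)) g = 1 := by
            rw [hg, map_prod]
            simp
          simpa [constantCoeff_eq] using this
        simp [this]
      · simpa using hNNg d
    have hcoeff_single : ∀ i : Fin n, 1 ≤ coeff (Finsupp.single i 1) (g - 1) := by
      intro i
      have hne : (0 : Fin n →₀ ℕ) ≠ Finsupp.single i 1 := fun h => by simpa using h.symm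
      rw [coeff_sub, coeff_one, if_neg hne, sub_zero]
      -- coeff (single i 1) g ≥ 1
      set a : Fin n → (Fin n →₀ ℕ) := fun j => if j = i then Finsupp.single i 1 else 0 with ha
      have hsa : (∑ j, a j) = Finsupp.single i 1 := by
        rw [ha]; simp
      have hkey := coeff_prod_ge Finset.univ
        (fun j => ((X j : MvPolynomial (Fin n) ℚ) + 1) ^ e)
        (fun j => (NN_X_add_one j).pow e) a
      rw [hsa, ← hg] at hkey
      refine le_trans ?_ hkey
      rw [← Finset.mul_prod_erase Finset.univ _ (Finset.mem_univ i)]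
      have h1 : ∏ j ∈ Finset.univ.erase i,
          coeff (a j) (((X j : MvPolynomial (Fin n) ℚ) + 1) ^ e) = 1 := by
        refine Finset.prod_eq_one fun j hj => ?_
        have : a j = 0 := by
          rw [ha]; simp [Finset.mem_erase.mp hj |>.1]
        rw [this, coeff_zero_X_add_one_pow]
      rw [h1, mul_one]
      have : a i = Finsupp.single i 1 := by rw [ha]; simp
      rw [this]
      exact one_le_coeff_single_pow i e he
    -- coefficient of one1 in (g-1)^n is ≥ 1
    have hpow : (g - 1) ^ n = ∏ _i : Fin n, (g - 1) := by
      simp [Finset.prod_const]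
    have hkey := coeff_prod_ge Finset.univ (fun _ : Fin n => g - 1) (fun _ => hNNh)
      (fun i => Finsupp.single i 1)
    rw [← hone1, ← hpow] at hkey
    have h1 : (1 : ℚ) ≤ ∏ i : Fin n, coeff (Finsupp.single i 1) (g - 1) := by
      calc (1 : ℚ) = ∏ _i : Fin n, (1 : ℚ) := by simp
        _ ≤ _ := Finset.prod_le_prod (fun i _ => zero_le_one)
            (fun i _ => hcoeff_single i)
    have := le_trans h1 hkey
    intro hzero
    rw [hzero] at this
    norm_num at this
  · -- no generator divides one1
    rintro s ⟨-, j, hj⟩ hle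
    have := hle j
    rw [hone1_apply j] at this
    omega
end

section
/- Let c ≥ 3 be a fixed integer. Then for every n ≥ c there exists a finitely generated nilpotent torsion-free group G_n which is a semidirect product B_n ⋉ A_n satisfying: (i) A_n and B_n are abelian (so G_n is metabelian); (ii) B_n is generated by n elements t_1, …, t_n such that the subset T_n = t_1A_n ∪ ⋯ ∪ t_nA_n ∪ A_n satisfies the Malcev law M_c(x,y); and (iii) for every integer e ≥ 1 the Malcev law M_n(x,y) fails for some substitution of two elements of the coset (t_1⋯t_n)^e A_n; in particular G_n does not satisfy M_n(x,y). -/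
open Pointwise

/-- A witness for Lemma 3.1: a finitely generated nilpotent torsion-free group
`G = B ⋉ A` (given internally: `A` normal, `A ⊓ B = ⊥`, `A ⊔ B = ⊤`) with `A`, `B`
abelian, `B` generated by `t 0, …, t (n-1)`, such that the union of cosets
`T = t₁A ∪ ⋯ ∪ tₙA ∪ A` satisfies the Malcev law `M_c`, while for every `e ≥ 1`
the law `M_n` fails for some substitution of two elements of the coset
`(t₁⋯tₙ)ᵉA`; in particular `G` does not satisfy `M_n`. -/
structure MalcevCounterexampleLevel (c n : ℕ) : Type 1 where
  G : Type
  [grp : Group G]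
  fg : Group.FG G
  nilpotent : Group.IsNilpotent G
  torsionFree : ∀ g : G, g ≠ 1 → ¬IsOfFinOrder g
  A : Subgroup G
  B : Subgroup G
  normalA : A.Normal
  inf_eq_bot : A ⊓ B = ⊥
  sup_eq_top : A ⊔ B = ⊤
  abelianA : ∀ x y : A, x * y = y * x
  abelianB : ∀ x y : B, x * y = y * x
  t : Fin n → G
  t_mem : ∀ i, t i ∈ B
  t_gen : Subgroup.closure (Set.range t) = B
  T_satisfies_Mc : ∀ x ∈ (⋃ i, t i • (A : Set G)) ∪ (A : Set G),
    ∀ y ∈ (⋃ i, t i • (A : Set G)) ∪ (A : Set G),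
      malcevAlpha c x y = malcevBeta c x y
  Mn_fails_on_coset : ∀ e : ℕ, 1 ≤ e →
    ∃ x ∈ ((List.ofFn t).prod ^ e) • (A : Set G),
      ∃ y ∈ ((List.ofFn t).prod ^ e) • (A : Set G),
        malcevAlpha n x y ≠ malcevBeta n x y
  not_Mn : ∃ x y : G, malcevAlpha n x y ≠ malcevBeta n x y

namespace MalcevCE

theorem malcevPair_succ {G : Type*} [Monoid G] (c : ℕ) (x y : G) :
    malcevPair (c+1) x y =
      ((malcevPair c x y).1 * (malcevPair c x y).2,
       (malcevPair c x y).2 * (malcevPair c x y).1) := rfl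

/-! ### An abstract killing lemma in rings -/

section RingKill

variable {R : Type*} [Ring R]

/-- `opE T j = (1 - T^(2^(j-1))) * ⋯ * (1 - T^2) * (1 - T)`. -/
def opE (T : R) : ℕ → R
  | 0 => 1
  | j+1 => (1 - T ^ (2 ^ j)) * opE T j

theorem opE_succ (T : R) (j : ℕ) : opE T (j+1) = (1 - T ^ (2 ^ j)) * opE T j := rfl

variable {P Q : R} (hP : P * P = 0) (hQ : Q * Q = 0) (hPQ : P * Q = Q * P)

theorem delta_mul_Q (hQ : Q * Q = 0) :
    (P + Q + P * Q) * Q = P * Q := by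
  have h1 : (P * Q) * Q = 0 := by rw [mul_assoc, hQ, mul_zero]
  rw [add_mul, add_mul, hQ, h1, add_zero, add_zero]

theorem delta_mul_P (hP : P * P = 0) (hPQ : P * Q = Q * P) :
    (P + Q + P * Q) * P = Q * P := by
  have h1 : (P * Q) * P = 0 := by rw [hPQ, mul_assoc, hP, mul_zero]
  rw [add_mul, add_mul, hP, h1, add_zero, zero_add]

theorem opE2_mul_Q (hP : P * P = 0) (hQ : Q * Q = 0) (hPQ : P * Q = Q * P) :
    opE ((1+P)*(1+Q)) 2 * Q = 0 := by
  have hD2 : ∀ D : R, 1 - (1+D) ^ (2:ℕ) = -((2+D)*D) := fun D => by noncomm_ring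
  have hD1 : ∀ D : R, 1 - (1+D) = -D := fun D => by noncomm_ring
  have hT : (1+P)*(1+Q) = 1 + (P+Q+P*Q) := by noncomm_ring
  have hDQ : (P+Q+P*Q) * Q = P * Q := delta_mul_Q hQ
  have hDP : (P+Q+P*Q) * P = Q * P := delta_mul_P hP hPQ
  have hDPQ : (P+Q+P*Q) * (P * Q) = 0 := by
    rw [← mul_assoc, hDP, mul_assoc, hPQ, ← mul_assoc, hQ, zero_mul]
  have e1 : opE ((1+P)*(1+Q)) 2
      = ((2+(P+Q+P*Q))*(P+Q+P*Q)) * (P+Q+P*Q) := by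
    rw [opE_succ, opE_succ]
    show (1 - ((1+P)*(1+Q)) ^ (2^1:ℕ)) * ((1 - ((1+P)*(1+Q)) ^ (2^0:ℕ)) * 1) = _
    norm_num
    rw [hT, hD2, hD1, neg_mul_neg]
  rw [e1, mul_assoc, hDQ, mul_assoc, hDPQ, mul_zero]

theorem opE2_mul_P (hP : P * P = 0) (hQ : Q * Q = 0) (hPQ : P * Q = Q * P) :
    opE ((1+P)*(1+Q)) 2 * P = 0 := by
  have hD2 : ∀ D : R, 1 - (1+D) ^ (2:ℕ) = -((2+D)*D) := fun D => by noncomm_ring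
  have hD1 : ∀ D : R, 1 - (1+D) = -D := fun D => by noncomm_ring
  have hT : (1+P)*(1+Q) = 1 + (P+Q+P*Q) := by noncomm_ring
  have hDQ : (P+Q+P*Q) * Q = P * Q := delta_mul_Q hQ
  have hDP : (P+Q+P*Q) * P = Q * P := delta_mul_P hP hPQ
  have hDQP : (P+Q+P*Q) * (Q * P) = 0 := by
    rw [← mul_assoc, hDQ, mul_assoc, ← hPQ, ← mul_assoc, hP, zero_mul]
  have e1 : opE ((1+P)*(1+Q)) 2
      = ((2+(P+Q+P*Q))*(P+Q+P*Q)) * (P+Q+P*Q) := by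
    rw [opE_succ, opE_succ]
    show (1 - ((1+P)*(1+Q)) ^ (2^1:ℕ)) * ((1 - ((1+P)*(1+Q)) ^ (2^0:ℕ)) * 1) = _
    norm_num
    rw [hT, hD2, hD1, neg_mul_neg]
  rw [e1, mul_assoc, hDP, mul_assoc, hDQP, mul_zero]

theorem opE_mul_Q (hP : P * P = 0) (hQ : Q * Q = 0) (hPQ : P * Q = Q * P) :
    ∀ j, 2 ≤ j → opE ((1+P)*(1+Q)) j * Q = 0 := by
  intro j hj
  induction j with
  | zero => omega
  | succ k ih =>
    rcases Nat.lt_or_ge k 2 with hk | hk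
    · interval_cases k
      · omega
      · exact opE2_mul_Q hP hQ hPQ
    · rw [opE_succ, mul_assoc, ih hk, mul_zero]

theorem opE_mul_P (hP : P * P = 0) (hQ : Q * Q = 0) (hPQ : P * Q = Q * P) :
    ∀ j, 2 ≤ j → opE ((1+P)*(1+Q)) j * P = 0 := by
  intro j hj
  induction j with
  | zero => omega
  | succ k ih =>
    rcases Nat.lt_or_ge k 2 with hk | hk
    · interval_cases k
      · omega
      · exact opE2_mul_P hP hQ hPQ
    · rw [opE_succ, mul_assoc, ih hk, mul_zero]

end RingKill

/-! ### The module `Mo n` and unipotent operators -/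

section ModuleOps

variable {n : ℕ}

/-- The underlying abelian group: free of rank `2^n`. -/
abbrev Mo (n : ℕ) := Finset (Fin n) → ℤ

/-- Endomorphism ring. -/
abbrev En (n : ℕ) := AddMonoid.End (Mo n)

/-- "Multiplication by `ε i`". -/
def Lop (i : Fin n) : En n :=
  AddMonoidHom.mk' (fun f S => if i ∈ S then f (S.erase i) else 0)
    (fun f g => by funext S; by_cases h : i ∈ S <;> simp [h])

theorem Lop_apply (i : Fin n) (f : Mo n) (S : Finset (Fin n)) :
    Lop i f S = if i ∈ S then f (S.erase i) else 0 := rfl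

theorem Lop_comm (i j : Fin n) : (Lop i * Lop j : En n) = Lop j * Lop i := by
  rcases eq_or_ne i j with rfl | hij
  · rfl
  · refine AddMonoidHom.ext fun f => ?_
    funext S
    show Lop i (Lop j f) S = Lop j (Lop i f) S
    simp only [Lop_apply, Finset.mem_erase]
    by_cases hi : i ∈ S <;> by_cases hj : j ∈ S <;>
      simp [hi, hj, hij, hij.symm, Finset.erase_right_comm]

theorem Lop_sq (i : Fin n) : (Lop i * Lop i : En n) = 0 := by
  refine AddMonoidHom.ext fun f => ?_
  funext S
  show Lop i (Lop i f) S = 0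
  simp [Lop_apply, Finset.notMem_erase]

theorem Lop_cast_sq (i : Fin n) (m : ℤ) :
    (((m : En n) * Lop i) * ((m : En n) * Lop i) : En n) = 0 := by
  rw [(Int.cast_commute m (Lop i)).symm.mul_mul_mul_comm, Lop_sq, mul_zero]

/-- The unit `1 + m ε_i` of the endomorphism ring. -/
def Vop (i : Fin n) (m : ℤ) : (En n)ˣ where
  val := 1 + (m : En n) * Lop i
  inv := 1 - (m : En n) * Lop i
  val_inv := by
    rw [add_mul, one_mul, mul_sub, mul_one, Lop_cast_sq, sub_zero, sub_add_cancel]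
  inv_val := by
    rw [sub_mul, one_mul, mul_add, mul_one, Lop_cast_sq, add_zero, add_sub_cancel_right]

theorem Vop_val (i : Fin n) (m : ℤ) : (Vop i m).val = 1 + (m : En n) * Lop i := rfl

theorem Vop_val_comm (i j : Fin n) (a b : ℤ) :
    (Vop i a).val * (Vop j b).val = (Vop j b).val * (Vop i a).val := by
  simp only [Vop_val, add_mul, mul_add, one_mul, mul_one]
  rw [(Int.cast_commute b (Lop i)).symm.mul_mul_mul_comm,
    (Int.cast_commute a (Lop j)).symm.mul_mul_mul_comm,
    Lop_comm i j, ← Int.cast_mul, Int.mul_comm a b, Int.cast_mul]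
  abel

theorem Vop_comm (i j : Fin n) (a b : ℤ) : Commute (Vop i a) (Vop j b) :=
  Units.ext (by simpa using Vop_val_comm i j a b)

theorem Vop_add (i : Fin n) (a b : ℤ) : Vop i (a + b) = Vop i a * Vop i b := by
  apply Units.ext
  simp only [Units.val_mul, Vop_val, add_mul, mul_add, one_mul, mul_one]
  rw [(Int.cast_commute b (Lop i)).symm.mul_mul_mul_comm, Lop_sq, mul_zero, add_zero,
    Int.cast_add, add_mul]
  abel

theorem Vop_zero (i : Fin n) : Vop i 0 = 1 := by
  apply Units.ext
  simp [Vop_val]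

/-- The action of `ℤ^n` by units of the endomorphism ring:
`v ↦ ∏ i (1 + v i • ε i)`. -/
def eta : Multiplicative (Fin n → ℤ) →* (En n)ˣ where
  toFun v := Finset.univ.noncommProd (fun i => Vop i (v.toAdd i))
    (fun i _ j _ _ => Vop_comm i j _ _)
  map_one' := by
    have h2 : ∀ i ∈ Finset.univ,
        Vop i (Multiplicative.toAdd (1 : Multiplicative (Fin n → ℤ)) i)
          = (fun _ => (1 : (En n)ˣ)) i := fun i _ => Vop_zero i
    exact (Finset.noncommProd_congr rfl h2 (fun i _ j _ _ => Vop_comm i j _ _)).trans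
      ((Finset.noncommProd_eq_pow_card _ _ _ _ (fun x _ => rfl)).trans (one_pow _))
  map_mul' v w := by
    have h1 : ∀ i ∈ Finset.univ,
        Vop i (Multiplicative.toAdd (v * w) i)
          = (fun i => Vop i (v.toAdd i) * Vop i (w.toAdd i)) i :=
      fun i _ => Vop_add i _ _
    rw [Finset.noncommProd_congr rfl h1 (fun i _ j _ _ => Vop_comm i j _ _)]
    exact Finset.noncommProd_mul_distrib (fun i => Vop i (v.toAdd i))
      (fun i => Vop i (w.toAdd i)) (fun i _ j _ _ => Vop_comm i j _ _)
      (fun i _ j _ _ => Vop_comm i j _ _) (fun i _ j _ _ => Vop_comm i j _ _)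

/-- General products of the `Vop`, as endomorphisms. -/
def NP (m : Fin n → ℤ) (K : Finset (Fin n)) : En n :=
  K.noncommProd (fun i => (Vop i (m i)).val)
    (fun i _ j _ _ => Vop_val_comm i j _ _)

theorem NP_empty (m : Fin n → ℤ) : NP m ∅ = 1 := Finset.noncommProd_empty _ _

theorem NP_insert (m : Fin n → ℤ) (K : Finset (Fin n)) (a : Fin n) (ha : a ∉ K) :
    NP m (insert a K) = (Vop a (m a)).val * NP m K :=
  Finset.noncommProd_insert_of_notMem _ _ _ _ ha

theorem eta_val (v : Multiplicative (Fin n → ℤ)) :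
    (eta v).val = NP v.toAdd Finset.univ := by
  show (Units.coeHom (En n)) _ = _
  exact Finset.map_noncommProd _ _ _ (Units.coeHom (En n))

theorem Vop_apply (i : Fin n) (m : ℤ) (f : Mo n) (S : Finset (Fin n)) :
    (Vop i m).val f S = f S + m * (if i ∈ S then f (S.erase i) else 0) := by
  show ((1 : En n) + (m : En n) * Lop i) f S = _
  show f S + ((m : En n) ((Lop i) f)) S = _
  rw [AddMonoid.End.intCast_apply]
  show f S + m * ((Lop i) f S) = _
  rw [Lop_apply]

end ModuleOps

/-! ### Positivity machinery -/

section Positivity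

variable {n : ℕ}

theorem NP_apply_insert (m : Fin n → ℤ) {K : Finset (Fin n)} {a : Fin n} (ha : a ∉ K)
    (f : Mo n) (S : Finset (Fin n)) :
    NP m (insert a K) f S
      = NP m K f S + m a * (if a ∈ S then NP m K f (S.erase a) else 0) := by
  rw [NP_insert _ _ _ ha]
  exact Vop_apply a (m a) (NP m K f) S

theorem NP_apply_empty (m : Fin n → ℤ) (f : Mo n) (S : Finset (Fin n)) :
    NP m ∅ f S = f S := by rw [NP_empty]; rfl

theorem NP_nonneg_le (m : Fin n → ℤ) (hm : ∀ i, 0 ≤ m i) (K : Finset (Fin n)) (f : Mo n)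
    (hf : ∀ S, 0 ≤ f S) :
    (∀ S, 0 ≤ NP m K f S) ∧ (∀ S, f S ≤ NP m K f S) := by
  classical
  induction K using Finset.induction_on with
  | empty =>
    exact ⟨fun S => by rw [NP_apply_empty]; exact hf S, fun S => by rw [NP_apply_empty]⟩
  | @insert a K ha ih =>
    obtain ⟨h0, h1⟩ := ih
    have hnn : ∀ S : Finset (Fin n), 0 ≤ m a * (if a ∈ S then NP m K f (S.erase a) else 0) := by
      intro S
      refine mul_nonneg (hm a) ?_
      split
      · exact h0 _
      · exact le_refl 0
    constructor
    · intro S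
      rw [NP_apply_insert m ha f S]
      exact add_nonneg (h0 S) (hnn S)
    · intro S
      rw [NP_apply_insert m ha f S]
      exact le_trans (h1 S) (le_add_of_nonneg_right (hnn S))

theorem NP_eq_low (m : Fin n → ℤ) {j : ℕ} (K : Finset (Fin n)) (f : Mo n)
    (hf : ∀ S, S.card < j → f S = 0) :
    ∀ S : Finset (Fin n), S.card ≤ j → NP m K f S = f S := by
  classical
  induction K using Finset.induction_on with
  | empty => intro S _; rw [NP_apply_empty]
  | @insert a K ha ih =>
    intro S hS
    rw [NP_apply_insert m ha f S]
    have h2 : (if a ∈ S then NP m K f (S.erase a) else 0) = 0 := by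
      split
      · next h =>
        have hcard : (S.erase a).card = S.card - 1 := Finset.card_erase_of_mem h
        have hpos : 0 < S.card := Finset.card_pos.mpr ⟨a, h⟩
        rw [ih (S.erase a) (by omega), hf (S.erase a) (by omega)]
      · rfl
    rw [h2, mul_zero, add_zero, ih S hS]

theorem NP_lt_high (m : Fin n → ℤ) (hm : ∀ i, 1 ≤ m i) {j : ℕ} (K : Finset (Fin n)) (f : Mo n)
    (hf0 : ∀ S, 0 ≤ f S) (hflow : ∀ S, S.card < j → f S = 0)
    (hfpos : ∀ S, S.card = j → 0 < f S) :
    ∀ S, S.card = j + 1 → (∃ i ∈ K, i ∈ S) → f S < NP m K f S := by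
  classical
  have hm0 : ∀ i, 0 ≤ m i := fun i => le_trans zero_le_one (hm i)
  induction K using Finset.induction_on with
  | empty => rintro S _ ⟨i, hi, -⟩; exact absurd hi (Finset.notMem_empty i)
  | @insert a K ha ih =>
    rintro S hS ⟨i, hiK, hiS⟩
    rw [NP_apply_insert m ha f S]
    by_cases haS : a ∈ S
    · have h1 : f S ≤ NP m K f S := (NP_nonneg_le m hm0 K f hf0).2 S
      have hcard : (S.erase a).card = j := by
        have := Finset.card_erase_of_mem haS
        omega
      have h2 : NP m K f (S.erase a) = f (S.erase a) :=
        NP_eq_low m K f hflow (S.erase a) (le_of_eq hcard)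
      have h3 : 0 < f (S.erase a) := hfpos _ hcard
      have h4 : 1 * f (S.erase a) ≤ m a * f (S.erase a) :=
        mul_le_mul_of_nonneg_right (hm a) (le_of_lt h3)
      rw [if_pos haS, h2]
      nlinarith
    · have hiK' : i ∈ K := by
        rcases Finset.mem_insert.mp hiK with rfl | h
        · exact absurd hiS haS
        · exact h
      have := ih S hS ⟨i, hiK', hiS⟩
      rw [if_neg haS, mul_zero, add_zero]
      exact this

/-- The cone of functions vanishing below level `j`, nonnegative, and positive at level `j`. -/
def InC (j : ℕ) (f : Mo n) : Prop :=
  (∀ S, 0 ≤ f S) ∧ (∀ S, S.card < j → f S = 0) ∧ (∀ S, S.card = j → 0 < f S)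

theorem InC_NP {j : ℕ} {f : Mo n} (hf : InC j f) (m : ℤ) (hm : 0 ≤ m) :
    InC j (NP (fun _ => m) Finset.univ f) := by
  obtain ⟨h0, hlow, hpos⟩ := hf
  refine ⟨(NP_nonneg_le _ (fun _ => hm) _ _ h0).1, fun S hS => ?_, fun S hS => ?_⟩
  · rw [NP_eq_low _ _ _ hlow S (le_of_lt hS)]; exact hlow S hS
  · rw [NP_eq_low _ _ _ hlow S (le_of_eq hS)]; exact hpos S hS

theorem InC_step {j : ℕ} {f : Mo n} (hf : InC j f) (m : ℤ) (hm : 1 ≤ m) :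
    InC (j+1) (NP (fun _ => m) Finset.univ f - f) := by
  obtain ⟨h0, hlow, hpos⟩ := hf
  have hm0 : ∀ i : Fin n, 0 ≤ m := fun _ => le_trans zero_le_one hm
  refine ⟨fun S => ?_, fun S hS => ?_, fun S hS => ?_⟩
  · have := (NP_nonneg_le (fun _ => m) hm0 Finset.univ f h0).2 S
    simpa using sub_nonneg.mpr this
  · have : NP (fun _ => m) Finset.univ f S = f S :=
      NP_eq_low _ _ _ hlow S (by omega)
    show NP (fun _ => m) Finset.univ f S - f S = 0
    rw [this, sub_self]
  · have hne : ∃ i ∈ Finset.univ, i ∈ S := by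
      have : 0 < S.card := by omega
      obtain ⟨i, hi⟩ := Finset.card_pos.mp this
      exact ⟨i, Finset.mem_univ i, hi⟩
    have := NP_lt_high (fun _ => m) (fun _ => hm) Finset.univ f h0 hlow hpos S hS hne
    show 0 < NP (fun _ => m) Finset.univ f S - f S
    omega

/-- The function `δ_∅`, i.e. the unit of the convolution ring. -/
def deltaEmpty : Mo n := fun S => if S = ∅ then 1 else 0

theorem InC_delta : InC 0 (deltaEmpty : Mo n) := by
  refine ⟨fun S => ?_, fun S hS => by omega, fun S hS => ?_⟩
  · unfold deltaEmpty; split <;> simp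
  · unfold deltaEmpty
    rw [if_pos (Finset.card_eq_zero.mp hS)]
    exact zero_lt_one

end Positivity

/-! ### The group -/

section TheGroup

variable {n : ℕ}

/-- The automorphism of `Multiplicative (Mo n)` induced by the unit `eta v`. -/
def phiFn (v : Multiplicative (Fin n → ℤ)) :
    Multiplicative (Mo n) ≃* Multiplicative (Mo n) where
  toFun x := Multiplicative.ofAdd ((eta v).val x.toAdd)
  invFun x := Multiplicative.ofAdd ((eta v).inv x.toAdd)
  left_inv x := by
    have h : ((eta v).inv * (eta v).val) x.toAdd = (1 : En n) x.toAdd :=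
      congrArg (fun e : En n => e x.toAdd) (eta v).inv_val
    show Multiplicative.ofAdd ((eta v).inv ((eta v).val x.toAdd)) = x
    have h' : (eta v).inv ((eta v).val x.toAdd) = x.toAdd := h
    rw [h']
    simp
  right_inv x := by
    have h : ((eta v).val * (eta v).inv) x.toAdd = (1 : En n) x.toAdd :=
      congrArg (fun e : En n => e x.toAdd) (eta v).val_inv
    show Multiplicative.ofAdd ((eta v).val ((eta v).inv x.toAdd)) = x
    have h' : (eta v).val ((eta v).inv x.toAdd) = x.toAdd := h
    rw [h']
    simp
  map_mul' x y := by
    show Multiplicative.ofAdd ((eta v).val (x.toAdd + y.toAdd)) = _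
    rw [map_add]
    rfl

/-- The action of `ℤ^n` on `Multiplicative (Mo n)`. -/
def phi : Multiplicative (Fin n → ℤ) →* MulAut (Multiplicative (Mo n)) where
  toFun := phiFn
  map_one' := by
    refine MulEquiv.ext fun x => ?_
    show Multiplicative.ofAdd ((eta 1).val x.toAdd) = x
    rw [map_one eta]
    simp
  map_mul' v w := by
    refine MulEquiv.ext fun x => ?_
    show Multiplicative.ofAdd ((eta (v*w)).val x.toAdd)
      = Multiplicative.ofAdd ((eta v).val ((eta w).val x.toAdd))
    rw [map_mul eta, Units.val_mul]
    rfl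

/-- The group `G_n`. -/
abbrev Gp (n : ℕ) := (Multiplicative (Mo n)) ⋊[(phi : Multiplicative (Fin n → ℤ) →* MulAut (Multiplicative (Mo n)))] (Multiplicative (Fin n → ℤ))

theorem phi_toAdd (v : Multiplicative (Fin n → ℤ)) (x : Multiplicative (Mo n)) :
    ((phi v) x).toAdd = (eta v).val x.toAdd := rfl

/-! ### The Malcev recursion -/

theorem pair_right (x y : Gp n) :
    ∀ k, (malcevPair (k+1) x y).1.right = (x.right * y.right) ^ (2^k) ∧
      (malcevPair (k+1) x y).2.right = (x.right * y.right) ^ (2^k)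
  | 0 => by
    constructor
    · show (x * y).right = _
      rw [SemidirectProduct.mul_right]
      norm_num
    · show (y * x).right = _
      rw [SemidirectProduct.mul_right, mul_comm]
      norm_num
  | (k+1) => by
    obtain ⟨h1, h2⟩ := pair_right x y k
    have hp : ∀ s : Multiplicative (Fin n → ℤ), s ^ (2^k) * s ^ (2^k) = s ^ (2^(k+1)) := by
      intro s
      rw [← pow_add]
      congr 1
      omega
    constructor
    · show ((malcevPair (k+1) x y).1 * (malcevPair (k+1) x y).2).right = _
      rw [SemidirectProduct.mul_right, h1, h2, hp]
    · show ((malcevPair (k+1) x y).2 * (malcevPair (k+1) x y).1).right = _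
      rw [SemidirectProduct.mul_right, h1, h2, hp]

/-- The difference of the `N`-components of the two Malcev words. -/
def ddiff (x y : Gp n) (k : ℕ) : Mo n :=
  (malcevPair k x y).1.left.toAdd - (malcevPair k x y).2.left.toAdd

theorem ddiff_formula (x y : Gp n) :
    ∀ k, ddiff x y (k+1) = opE ((eta (x.right * y.right)).val : En n) k (ddiff x y 1)
  | 0 => rfl
  | (k+1) => by
    set T := ((eta (x.right * y.right)).val : En n) with hT
    have hE : ((eta ((x.right * y.right)^(2^k))).val : En n) = T ^ (2^k) := by
      rw [map_pow, hT]
      exact Units.val_pow_eq_pow_val _ _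
    have e1 : (malcevPair (k+2) x y).1.left.toAdd
        = (malcevPair (k+1) x y).1.left.toAdd
          + (T ^ (2^k)) (malcevPair (k+1) x y).2.left.toAdd := by
      show ((malcevPair (k+1) x y).1 * (malcevPair (k+1) x y).2).left.toAdd = _
      rw [SemidirectProduct.mul_left]
      show (malcevPair (k+1) x y).1.left.toAdd
          + ((phi ((malcevPair (k+1) x y).1.right)) (malcevPair (k+1) x y).2.left).toAdd = _
      rw [phi_toAdd, (pair_right x y k).1, hE]
    have e2 : (malcevPair (k+2) x y).2.left.toAdd
        = (malcevPair (k+1) x y).2.left.toAdd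
          + (T ^ (2^k)) (malcevPair (k+1) x y).1.left.toAdd := by
      show ((malcevPair (k+1) x y).2 * (malcevPair (k+1) x y).1).left.toAdd = _
      rw [SemidirectProduct.mul_left]
      show (malcevPair (k+1) x y).2.left.toAdd
          + ((phi ((malcevPair (k+1) x y).2.right)) (malcevPair (k+1) x y).1.left).toAdd = _
      rw [phi_toAdd, (pair_right x y k).2, hE]
    have key : ddiff x y (k+2) = ddiff x y (k+1) - (T ^ (2^k)) (ddiff x y (k+1)) := by
      unfold ddiff
      rw [e1, e2, map_sub]
      abel
    rw [key, ddiff_formula x y k, opE_succ]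
    have : ((1 - T ^ (2^k) : En n) * opE T k) (ddiff x y 1)
        = opE T k (ddiff x y 1) - (T ^ (2^k)) (opE T k (ddiff x y 1)) := by
      show (1 - T ^ (2^k) : En n) (opE T k (ddiff x y 1)) = _
      rfl
    rw [this]

theorem malcev_eq_of (x y : Gp n) (k : ℕ) (h : ddiff x y (k+1) = 0) :
    malcevAlpha (k+1) x y = malcevBeta (k+1) x y := by
  show (malcevPair (k+1) x y).1 = (malcevPair (k+1) x y).2
  have hl : (malcevPair (k+1) x y).1.left = (malcevPair (k+1) x y).2.left := by
    have h2 : (malcevPair (k+1) x y).1.left.toAdd = (malcevPair (k+1) x y).2.left.toAdd :=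
      sub_eq_zero.mp h
    exact Multiplicative.toAdd.injective h2
  have hr : (malcevPair (k+1) x y).1.right = (malcevPair (k+1) x y).2.right := by
    rw [(pair_right x y k).1, (pair_right x y k).2]
  cases hp : malcevPair (k+1) x y with
  | mk a b =>
    rw [hp] at hl hr
    exact SemidirectProduct.ext hl hr

theorem ddiff_one (x y : Gp n) :
    ddiff x y 1 = x.left.toAdd + (eta x.right).val y.left.toAdd
      - (y.left.toAdd + (eta y.right).val x.left.toAdd) := rfl

end TheGroup

/-! ### Group-theoretic facts -/

section GroupFacts

open SemidirectProduct

variable {n : ℕ}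

theorem closure_single_top {ι : Type*} [Fintype ι] [DecidableEq ι] :
    Subgroup.closure (Set.range fun i => Multiplicative.ofAdd (Pi.single i (1:ℤ)))
      = (⊤ : Subgroup (Multiplicative (ι → ℤ))) := by
  rw [eq_top_iff]
  rintro x -
  have hx : x.toAdd = ∑ i : ι, (x.toAdd i) • Pi.single i (1:ℤ) := by
    funext j
    rw [Finset.sum_apply]
    have h : ∀ i : ι, ((x.toAdd i • Pi.single i (1:ℤ) : ι → ℤ)) j = if j = i then x.toAdd i else 0 := by
      intro i
      rw [Pi.smul_apply, Pi.single_apply]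
      split <;> simp
    rw [Finset.sum_congr rfl (fun i _ => h i)]
    simp
  have hx2 : x = ∏ i : ι, (Multiplicative.ofAdd (Pi.single i (1:ℤ))) ^ (x.toAdd i) := by
    calc x = Multiplicative.ofAdd x.toAdd := by simp
    _ = Multiplicative.ofAdd (∑ i : ι, (x.toAdd i) • Pi.single i (1:ℤ)) := by rw [← hx]
    _ = ∏ i : ι, Multiplicative.ofAdd ((x.toAdd i) • Pi.single i (1:ℤ)) := ofAdd_sum _ _
    _ = ∏ i : ι, (Multiplicative.ofAdd (Pi.single i (1:ℤ))) ^ (x.toAdd i) :=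
      Finset.prod_congr rfl fun i _ => ofAdd_zsmul _ _
  rw [hx2]
  exact Subgroup.prod_mem _ fun i _ =>
    Subgroup.zpow_mem _ (Subgroup.subset_closure (Set.mem_range_self i)) _

/-- The normal subgroup `A`. -/
def Asub (n : ℕ) : Subgroup (Gp n) :=
  (rightHom : Gp n →* Multiplicative (Fin n → ℤ)).ker

/-- The complement `B`. -/
def Bsub (n : ℕ) : Subgroup (Gp n) :=
  (inr : Multiplicative (Fin n → ℤ) →* Gp n).range

/-- The generators of `B`. -/
def tgen (n : ℕ) : Fin n → Gp n := fun i => inr (Multiplicative.ofAdd (Pi.single i (1:ℤ)))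

theorem mem_Asub {g : Gp n} : g ∈ Asub n ↔ g.right = 1 := Iff.rfl

theorem Asub_normal : (Asub n).Normal := MonoidHom.normal_ker _

theorem Asub_sup_Bsub : Asub n ⊔ Bsub n = ⊤ := by
  rw [eq_top_iff]
  rintro g -
  rw [← inl_left_mul_inr_right g]
  refine Subgroup.mul_mem _ (Subgroup.mem_sup_left ?_) (Subgroup.mem_sup_right ?_)
  · exact mem_Asub.mpr rfl
  · exact ⟨g.right, rfl⟩

theorem Asub_inf_Bsub : Asub n ⊓ Bsub n = ⊥ := by
  rw [eq_bot_iff]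
  rintro g hg
  obtain ⟨hA, hB⟩ := Subgroup.mem_inf.mp hg
  obtain ⟨h, rfl⟩ := hB
  have h1 : h = 1 := mem_Asub.mp hA
  rw [h1, map_one]
  exact Subgroup.mem_bot.mpr rfl

theorem Asub_abelian : ∀ x y : Asub n, x * y = y * x := by
  rintro ⟨x, hx⟩ ⟨y, hy⟩
  have hx1 : x.right = 1 := mem_Asub.mp hx
  have hy1 : y.right = 1 := mem_Asub.mp hy
  apply Subtype.ext
  show x * y = y * x
  have h1 : ∀ a b : Gp n, a.right = 1 → a * b = ⟨a.left * b.left, b.right⟩ := by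
    intro a b ha
    cases a with
    | mk al ar =>
      cases b with
      | mk bl br =>
        simp only at ha
        subst ha
        show (⟨al * (phi 1) bl, 1 * br⟩ : Gp n) = _
        rw [map_one phi]
        simp
  rw [h1 x y hx1, h1 y x hy1, hx1, hy1, mul_comm x.left y.left]

theorem Bsub_abelian : ∀ x y : Bsub n, x * y = y * x := by
  rintro ⟨x, hx⟩ ⟨y, hy⟩
  obtain ⟨a, rfl⟩ := hx
  obtain ⟨b, rfl⟩ := hy
  apply Subtype.ext
  show inr a * inr b = inr b * inr a
  rw [← map_mul, ← map_mul, mul_comm]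

theorem tgen_mem_Bsub (i : Fin n) : tgen n i ∈ Bsub n := ⟨_, rfl⟩

theorem tgen_closure : Subgroup.closure (Set.range (tgen n)) = Bsub n := by
  have h : Set.range (tgen n)
      = (inr : Multiplicative (Fin n → ℤ) →* Gp n)
        '' (Set.range fun i => Multiplicative.ofAdd (Pi.single i (1:ℤ))) := by
    rw [← Set.range_comp]
    rfl
  rw [h, ← MonoidHom.map_closure, closure_single_top, ← MonoidHom.range_eq_map]
  rfl

theorem Gp_fg : Group.FG (Gp n) := by
  rw [Group.fg_iff]
  refine ⟨((inl : Multiplicative (Mo n) →* Gp n)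
      '' (Set.range fun S₀ : Finset (Fin n) => Multiplicative.ofAdd (Pi.single S₀ (1:ℤ))))
      ∪ Set.range (tgen n), ?_, ?_⟩
  · rw [Subgroup.closure_union, ← MonoidHom.map_closure, closure_single_top,
      ← MonoidHom.range_eq_map, tgen_closure]
    rw [range_inl_eq_ker_rightHom]
    exact Asub_sup_Bsub
  · exact Set.Finite.union ((Set.finite_range _).image _) (Set.finite_range _)

theorem pi_int_pow_eq_one {ι : Type*} {v : Multiplicative (ι → ℤ)} {k : ℕ}
    (hk : k ≠ 0) (h : v ^ k = 1) : v = 1 := by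
  have h2 : (k : ℕ) • v.toAdd = 0 := by
    rw [← toAdd_pow, h]
    rfl
  have h3 : v.toAdd = 0 := by
    funext i
    have := congrFun h2 i
    rw [Pi.smul_apply, Pi.zero_apply] at this
    rw [Pi.zero_apply]
    have hk' : (k : ℤ) ≠ 0 := Int.natCast_ne_zero.mpr hk
    have h4 : (k : ℤ) * v.toAdd i = 0 := by
      rw [← nsmul_eq_mul]
      exact this
    rcases mul_eq_zero.mp h4 with h | h
    · exact absurd h hk'
    · exact h
  calc v = Multiplicative.ofAdd v.toAdd := by simp
  _ = Multiplicative.ofAdd 0 := by rw [h3]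
  _ = 1 := rfl

theorem Gp_torsionFree : ∀ g : Gp n, g ≠ 1 → ¬IsOfFinOrder g := by
  intro g hg hfin
  apply hg
  have hk : 0 < orderOf g := hfin.orderOf_pos
  have hgk : g ^ orderOf g = 1 := pow_orderOf_eq_one g
  have hr : g.right ^ orderOf g = 1 := by
    have : (rightHom : Gp n →* _) (g ^ orderOf g) = 1 := by rw [hgk, map_one]
    rwa [map_pow] at this
  have hr1 : g.right = 1 := pi_int_pow_eq_one (by omega : orderOf g ≠ 0) hr
  have hgl : g = inl g.left := by
    conv_lhs => rw [← inl_left_mul_inr_right g]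
    rw [hr1, map_one, mul_one]
  have hl : g.left ^ orderOf g = 1 := by
    apply inl_injective (φ := (phi : Multiplicative (Fin n → ℤ) →* MulAut (Multiplicative (Mo n))))
    rw [map_pow, ← hgl, hgk, map_one]
  have hl1 : g.left = 1 := pi_int_pow_eq_one (by omega : orderOf g ≠ 0) hl
  rw [hgl, hl1, map_one]

end GroupFacts

/-! ### Nilpotency -/

section Nilpotency

open SemidirectProduct
open scoped commutatorElement

variable {n : ℕ}

theorem eta_fix_low {j : ℕ} (v : Multiplicative (Fin n → ℤ)) (z : Mo n)
    (hz : ∀ S, S.card < j → z S = 0) :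
    ∀ S : Finset (Fin n), S.card ≤ j → ((eta v).val z) S = z S := by
  rw [eta_val]
  exact NP_eq_low _ _ _ hz

theorem eta_fix_empty (v : Multiplicative (Fin n → ℤ)) (z : Mo n) :
    ((eta v).val z) ∅ = z ∅ :=
  eta_fix_low (j := 0) v z (fun _ hS => absurd hS (Nat.not_lt_zero _)) ∅ (by simp)

/-- The filtration subgroups. -/
def Hsub (n : ℕ) (j : ℕ) : Subgroup (Gp n) where
  carrier := {g | g.right = 1 ∧ ∀ S : Finset (Fin n), S.card < j → g.left.toAdd S = 0}
  one_mem' := ⟨rfl, fun _ _ => rfl⟩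
  mul_mem' := by
    rintro a b ⟨ha1, ha2⟩ ⟨hb1, hb2⟩
    constructor
    · show a.right * b.right = 1
      rw [ha1, hb1, one_mul]
    · intro S hS
      show (a.left.toAdd + (eta a.right).val b.left.toAdd) S = 0
      rw [Pi.add_apply, ha1, map_one eta]
      show a.left.toAdd S + ((1 : En n) b.left.toAdd) S = 0
      rw [AddMonoid.End.one_apply]
      rw [ha2 S hS, hb2 S hS, add_zero]
  inv_mem' := by
    rintro a ⟨ha1, ha2⟩
    constructor
    · show a.right⁻¹ = 1
      rw [ha1, inv_one]
    · intro S hS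
      show ((eta a.right⁻¹).val (-(a.left.toAdd))) S = 0
      rw [ha1, inv_one, map_one eta]
      show (-(a.left.toAdd)) S = 0
      rw [Pi.neg_apply, ha2 S hS, neg_zero]

theorem comm_right (g h : Gp n) : (⁅g, h⁆ : Gp n).right = 1 := by
  have h1 : (⁅g, h⁆ : Gp n).right = g.right * h.right * g.right⁻¹ * h.right⁻¹ := rfl
  rw [h1, mul_comm g.right h.right]
  group

theorem comm_left_empty (g h : Gp n) : (⁅g, h⁆ : Gp n).left.toAdd ∅ = 0 := by
  have mul0 : ∀ x y : Gp n, (x*y).left.toAdd ∅ = x.left.toAdd ∅ + y.left.toAdd ∅ := by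
    intro x y
    show (x.left.toAdd + (eta x.right).val y.left.toAdd) ∅ = _
    rw [Pi.add_apply, eta_fix_empty]
  have inv0 : ∀ x : Gp n, (x⁻¹).left.toAdd ∅ = -(x.left.toAdd ∅) := by
    intro x
    show ((eta x.right⁻¹).val (-(x.left.toAdd))) ∅ = _
    rw [eta_fix_empty, Pi.neg_apply]
  have h1 : (⁅g, h⁆ : Gp n) = g * h * g⁻¹ * h⁻¹ := rfl
  rw [h1, mul0, mul0, mul0, inv0, inv0]
  ring

theorem comm_left_of_right_one (g h : Gp n) (hg : g.right = 1) :
    (⁅g, h⁆ : Gp n).left.toAdd = g.left.toAdd - (eta h.right).val g.left.toAdd := by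
  have hcomp : ∀ (v w : Multiplicative (Fin n → ℤ)) (z : Mo n),
      (eta v).val ((eta w).val z) = (eta (v*w)).val z := by
    intro v w z
    rw [map_mul eta, Units.val_mul]
    rfl
  have h1 : (⁅g, h⁆ : Gp n).left.toAdd
      = g.left.toAdd + (eta g.right).val h.left.toAdd
        + (eta (g.right * h.right)).val ((eta g.right⁻¹).val (-(g.left.toAdd)))
        + (eta (g.right * h.right * g.right⁻¹)).val ((eta h.right⁻¹).val (-(h.left.toAdd))) := rfl
  rw [h1, hg, inv_one, hcomp, hcomp]
  simp only [one_mul, mul_one, mul_inv_cancel, map_one, Units.val_one, AddMonoid.End.coe_one,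
    id_eq, map_neg]
  abel

theorem Hsub_eq_bot : Hsub n (n+1) = ⊥ := by
  rw [eq_bot_iff]
  rintro g ⟨h1, h2⟩
  have hleft : g.left.toAdd = 0 := by
    funext S
    refine h2 S ?_
    have h3 : S.card ≤ n := by simpa using Finset.card_le_univ S
    omega
  have hleft1 : g.left = 1 := Multiplicative.toAdd.injective hleft
  have : g = 1 := by
    rw [← inl_left_mul_inr_right g, hleft1, h1, map_one, map_one, one_mul]
  rw [this]
  exact Subgroup.mem_bot.mpr rfl

theorem lcs_le : ∀ j, (⊤ : Subgroup (Gp n)).lowerCentralSeries (j+1) ≤ Hsub n (j+1)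
  | 0 => by
    rw [Subgroup.lowerCentralSeries_succ, Subgroup.lowerCentralSeries_zero]
    refine Subgroup.commutator_le.mpr fun g _ h _ => ?_
    refine ⟨comm_right g h, fun S hS => ?_⟩
    have hS0 : S = ∅ := Finset.card_eq_zero.mp (by omega)
    rw [hS0]
    exact comm_left_empty g h
  | (j+1) => by
    rw [Subgroup.lowerCentralSeries_succ]
    refine Subgroup.commutator_le.mpr fun g hg h _ => ?_
    obtain ⟨hg1, hg2⟩ := lcs_le j hg
    refine ⟨comm_right g h, fun S hS => ?_⟩
    rw [comm_left_of_right_one g h hg1]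
    show g.left.toAdd S - ((eta h.right).val g.left.toAdd) S = 0
    rw [eta_fix_low (j := j+1) h.right _ hg2 S (by omega), sub_self]

theorem Gp_nilpotent : Group.IsNilpotent (Gp n) := by
  rw [Subgroup.nilpotent_iff_lowerCentralSeries]
  exact ⟨n+1, eq_bot_iff.mpr (Hsub_eq_bot ▸ lcs_le n)⟩

end Nilpotency

/-! ### The Malcev law on the cosets -/

section MalcevConditions

open SemidirectProduct

variable {n : ℕ}

theorem noncommProd_eq_single {α β : Type*} [Monoid β] [DecidableEq α] {s : Finset α}
    (f : α → β) (comm) (i : α) (hi : i ∈ s) (h : ∀ j ∈ s, j ≠ i → f j = 1) :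
    s.noncommProd f comm = f i := by
  rw [Finset.noncommProd_congr (Finset.insert_erase hi).symm (fun x _ => rfl) comm]
  refine (Finset.noncommProd_insert_of_notMem _ _ _ _ (Finset.notMem_erase i s)).trans ?_
  rw [Finset.noncommProd_eq_pow_card _ _ _ 1 ?_, one_pow, mul_one]
  intro x hx
  obtain ⟨hxi, hxs⟩ := Finset.mem_erase.mp hx
  exact h x hxs hxi

theorem eta_single (i : Fin n) :
    eta (Multiplicative.ofAdd (Pi.single i (1:ℤ))) = Vop i 1 := by
  have h0 : eta (Multiplicative.ofAdd (Pi.single i (1:ℤ) : Fin n → ℤ))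
      = Finset.univ.noncommProd
        (fun j => Vop j
          (Multiplicative.toAdd (Multiplicative.ofAdd (Pi.single i (1:ℤ) : Fin n → ℤ)) j))
        (fun a _ b _ _ => Vop_comm a b _ _) := rfl
  rw [h0]
  refine (noncommProd_eq_single _ _ i (Finset.mem_univ i) ?_).trans ?_
  · intro j _ hj
    simp only [toAdd_ofAdd]
    rw [Pi.single_eq_of_ne hj, Vop_zero]
  · simp only [toAdd_ofAdd, Pi.single_eq_same]

/-- Possible values of `ρ(x.right) - 1` for `x` in the test set. -/
def goodP (P : En n) : Prop := P = 0 ∨ ∃ i, P = Lop i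

theorem goodP_sq {P : En n} (h : goodP P) : P * P = 0 := by
  rcases h with rfl | ⟨i, rfl⟩
  · rw [mul_zero]
  · exact Lop_sq i

theorem goodP_comm {P Q : En n} (hP : goodP P) (hQ : goodP Q) : P * Q = Q * P := by
  rcases hP with rfl | ⟨i, rfl⟩
  · rw [zero_mul, mul_zero]
  · rcases hQ with rfl | ⟨j, rfl⟩
    · rw [zero_mul, mul_zero]
    · exact Lop_comm i j

theorem mem_T_goodP {x : Gp n}
    (hx : x ∈ (⋃ i, tgen n i • (Asub n : Set (Gp n))) ∪ (Asub n : Set (Gp n))) :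
    goodP ((eta x.right).val - 1) := by
  rcases hx with hx | hx
  · obtain ⟨i, hi⟩ := Set.mem_iUnion.mp hx
    obtain ⟨a, ha, rfl⟩ := hi
    right
    refine ⟨i, ?_⟩
    have hr : (tgen n i • a).right = Multiplicative.ofAdd (Pi.single i (1:ℤ)) := by
      show (tgen n i).right * a.right = _
      rw [mem_Asub.mp ha, mul_one]
      rfl
    rw [hr, eta_single]
    show (1 + ((1:ℤ) : En n) * Lop i) - 1 = Lop i
    rw [Int.cast_one, one_mul, add_sub_cancel_left]
  · left
    rw [mem_Asub.mp hx, map_one]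
    show (1 : (En n)ˣ).val - 1 = 0
    rw [Units.val_one, sub_self]

theorem T_satisfies {c : ℕ} (hc3 : 3 ≤ c) (x y : Gp n)
    (hx : goodP ((eta x.right).val - 1)) (hy : goodP ((eta y.right).val - 1)) :
    malcevAlpha c x y = malcevBeta c x y := by
  obtain ⟨c', rfl⟩ : ∃ c', c = c' + 1 := ⟨c - 1, by omega⟩
  apply malcev_eq_of
  rw [ddiff_formula]
  have hP2 : ((eta x.right).val - 1) * ((eta x.right).val - 1) = 0 := goodP_sq hx
  have hQ2 : ((eta y.right).val - 1) * ((eta y.right).val - 1) = 0 := goodP_sq hy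
  have hPQ : ((eta x.right).val - 1) * ((eta y.right).val - 1)
      = ((eta y.right).val - 1) * ((eta x.right).val - 1) := goodP_comm hx hy
  have hTP : ((eta (x.right * y.right)).val : En n)
      = (1 + ((eta x.right).val - 1)) * (1 + ((eta y.right).val - 1)) := by
    rw [map_mul, Units.val_mul]
    congr 1 <;> abel
  have hd1 : ddiff x y 1
      = -(((eta y.right).val - 1) x.left.toAdd) + ((eta x.right).val - 1) y.left.toAdd := by
    rw [ddiff_one]
    show _ = -((eta y.right).val x.left.toAdd - (1 : En n) x.left.toAdd)
      + ((eta x.right).val y.left.toAdd - (1 : En n) y.left.toAdd)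
    rw [AddMonoid.End.one_apply, AddMonoid.End.one_apply]
    abel
  rw [hd1, map_add, map_neg]
  have h2 : 2 ≤ c' := by omega
  have k1 : opE ((eta (x.right * y.right)).val : En n) c'
      (((eta y.right).val - 1) x.left.toAdd) = 0 := by
    have hh : opE ((eta (x.right * y.right)).val : En n) c'
        (((eta y.right).val - 1) x.left.toAdd)
        = (opE ((eta (x.right * y.right)).val : En n) c' * ((eta y.right).val - 1))
          x.left.toAdd := rfl
    rw [hh, hTP, opE_mul_Q hP2 hQ2 hPQ c' h2]
    rfl
  have k2 : opE ((eta (x.right * y.right)).val : En n) c'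
      (((eta x.right).val - 1) y.left.toAdd) = 0 := by
    have hh : opE ((eta (x.right * y.right)).val : En n) c'
        (((eta x.right).val - 1) y.left.toAdd)
        = (opE ((eta (x.right * y.right)).val : En n) c' * ((eta x.right).val - 1))
          y.left.toAdd := rfl
    rw [hh, hTP, opE_mul_P hP2 hQ2 hPQ c' h2]
    rfl
  rw [k1, k2, neg_zero, zero_add]

end MalcevConditions

/-! ### Failure of `M_n` on the cosets of powers of `t₁⋯t_n` -/

section Failure

open SemidirectProduct

variable {n : ℕ}

theorem tgen_prod : (List.ofFn (tgen n)).prod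
    = inr (Multiplicative.ofAdd (fun _ => (1:ℤ) : Fin n → ℤ)) := by
  have h1 : List.ofFn (tgen n)
      = (List.ofFn fun i : Fin n =>
          Multiplicative.ofAdd (Pi.single i (1:ℤ) : Fin n → ℤ)).map
        (inr : Multiplicative (Fin n → ℤ) →* Gp n) := by
    rw [List.map_ofFn]
    rfl
  rw [h1, List.prod_hom _ (inr : Multiplicative (Fin n → ℤ) →* Gp n)]
  congr 1
  rw [List.prod_ofFn, ← ofAdd_sum]
  congr 1
  funext j
  rw [Finset.sum_apply]
  simp [Pi.single_apply]

theorem tgen_prod_pow (e : ℕ) : (List.ofFn (tgen n)).prod ^ e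
    = inr (Multiplicative.ofAdd (fun _ => (e:ℤ) : Fin n → ℤ)) := by
  have hw : (Multiplicative.ofAdd (fun _ => (e:ℤ) : Fin n → ℤ))
      = (Multiplicative.ofAdd (fun _ => (1:ℤ) : Fin n → ℤ)) ^ e := by
    apply Multiplicative.toAdd.injective
    funext i
    rw [toAdd_pow]
    show (e : ℤ) = (e • (fun _ => (1:ℤ) : Fin n → ℤ)) i
    rw [Pi.smul_apply]
    simp
  rw [tgen_prod, hw, map_pow]

theorem Mn_fails (hn3 : 3 ≤ n) (e : ℕ) (he : 1 ≤ e) :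
    ∃ x ∈ ((List.ofFn (tgen n)).prod ^ e) • (Asub n : Set (Gp n)),
      ∃ y ∈ ((List.ofFn (tgen n)).prod ^ e) • (Asub n : Set (Gp n)),
        malcevAlpha n x y ≠ malcevBeta n x y := by
  classical
  have he' : (1:ℤ) ≤ (e:ℤ) := by exact_mod_cast he
  have he0 : (0:ℤ) ≤ (e:ℤ) := by omega
  refine ⟨inr (Multiplicative.ofAdd (fun _ => (e:ℤ) : Fin n → ℤ))
      * inl (Multiplicative.ofAdd (deltaEmpty : Mo n)), ?_,
    inr (Multiplicative.ofAdd (fun _ => (e:ℤ) : Fin n → ℤ)), ?_, ?_⟩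
  · rw [tgen_prod_pow e]
    exact Set.mem_smul_set.mpr
      ⟨inl (Multiplicative.ofAdd (deltaEmpty : Mo n)),
        SetLike.mem_coe.mpr (mem_Asub.mpr rfl), rfl⟩
  · rw [tgen_prod_pow e]
    exact Set.mem_smul_set.mpr ⟨1, SetLike.mem_coe.mpr (one_mem _), mul_one _⟩
  set w : Multiplicative (Fin n → ℤ) := Multiplicative.ofAdd (fun _ => (e:ℤ)) with hwdef
  set X : Gp n := inr w * inl (Multiplicative.ofAdd (deltaEmpty : Mo n)) with hXdef
  set Y : Gp n := inr w with hYdef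
  have hXr : X.right = w := by
    rw [hXdef]
    show w * (1 : Multiplicative (Fin n → ℤ)) = w
    exact mul_one w
  have hYr : Y.right = w := rfl
  have hEw : ((eta w).val : En n) = NP (fun _ => (e:ℤ)) Finset.univ := by
    rw [hwdef, eta_val]
    simp only [toAdd_ofAdd]
  have hXlt : X.left.toAdd = NP (fun _ => (e:ℤ)) Finset.univ (deltaEmpty : Mo n) := by
    have h1 : X.left = (phi w) (Multiplicative.ofAdd (deltaEmpty : Mo n)) := by
      rw [hXdef]
      show (1 : Multiplicative (Mo n)) * (phi w) (Multiplicative.ofAdd (deltaEmpty : Mo n)) = _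
      exact one_mul _
    rw [h1, phi_toAdd, hEw]
    rfl
  have hYl : Y.left = 1 := rfl
  have hT : ∀ k : ℕ, (((eta (X.right * Y.right)).val : En n) ^ k)
      = NP (fun _ => ((k * (2*e) : ℕ) : ℤ)) Finset.univ := by
    intro k
    have hxyw : X.right * Y.right = w * w := by rw [hXr, hYr]
    have hwk : (w*w)^k = Multiplicative.ofAdd (fun _ => ((k * (2*e) : ℕ) : ℤ) : Fin n → ℤ) := by
      apply Multiplicative.toAdd.injective
      funext i
      rw [toAdd_pow]
      show (k • (Multiplicative.toAdd (w*w))) i = ((k * (2*e) : ℕ) : ℤ)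
      rw [Pi.smul_apply]
      show k • ((e:ℤ) + (e:ℤ)) = ((k * (2*e) : ℕ) : ℤ)
      rw [nsmul_eq_mul]
      push_cast
      ring
    rw [← Units.val_pow_eq_pow_val, ← map_pow, hxyw, hwk, eta_val]
    simp only [toAdd_ofAdd]
  set a1 : Mo n := NP (fun _ => (e:ℤ)) Finset.univ (deltaEmpty : Mo n) with ha1def
  have ha1C : InC 0 a1 := InC_NP InC_delta (e:ℤ) he0
  have hd1 : ddiff X Y 1 = -(NP (fun _ => (e:ℤ)) Finset.univ a1 - a1) := by
    rw [ddiff_one, hXr, hYr, hXlt, hYl]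
    rw [toAdd_one, map_zero, hEw]
    abel
  have main : ∀ j : ℕ, ∃ g : Mo n, InC (j+1) g ∧
      opE ((eta (X.right * Y.right)).val : En n) j (ddiff X Y 1) = ((-1:ℤ))^(j+1) • g := by
    intro j
    induction j with
    | zero =>
      refine ⟨NP (fun _ => (e:ℤ)) Finset.univ a1 - a1, InC_step ha1C (e:ℤ) he', ?_⟩
      show (1 : En n) (ddiff X Y 1) = _
      rw [AddMonoid.End.one_apply, hd1, pow_one, neg_one_zsmul]
    | succ k ih =>
      obtain ⟨g, hgC, hval⟩ := ih
      have hm1 : (1:ℤ) ≤ ((2^k * (2*e) : ℕ) : ℤ) := by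
        have h1 : (1:ℕ) ≤ 2^k := Nat.one_le_two_pow
        have h2 : (1:ℕ) ≤ 2^k * (2*e) := by
          calc (1:ℕ) = 1 * 1 := by norm_num
          _ ≤ 2^k * (2*e) := Nat.mul_le_mul h1 (by omega)
        exact_mod_cast h2
      have hstep : opE ((eta (X.right * Y.right)).val : En n) (k+1) (ddiff X Y 1)
          = opE ((eta (X.right * Y.right)).val : En n) k (ddiff X Y 1)
            - (((eta (X.right * Y.right)).val : En n) ^ (2^k))
              (opE ((eta (X.right * Y.right)).val : En n) k (ddiff X Y 1)) := by
        rw [opE_succ]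
        show ((1 - ((eta (X.right * Y.right)).val : En n) ^ (2^k)) : En n)
          (opE ((eta (X.right * Y.right)).val : En n) k (ddiff X Y 1)) = _
        rfl
      refine ⟨NP (fun _ => ((2^k * (2*e) : ℕ) : ℤ)) Finset.univ g - g,
        InC_step hgC _ hm1, ?_⟩
      rw [hstep, hval, hT (2^k), map_zsmul, ← smul_sub, pow_succ, mul_smul,
        neg_one_zsmul, neg_sub]
      congr 1
      rw [pow_succ, pow_succ]
      ring
  obtain ⟨g, hgC, hval⟩ := main (n-1)
  have hn1 : n - 1 + 1 = n := by omega
  have hdn : ddiff X Y n = ((-1:ℤ))^n • g := by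
    have h1 := ddiff_formula X Y (n-1)
    rw [hn1] at h1
    rw [h1, hval, hn1]
  have hgpos : 0 < g Finset.univ := by
    refine hgC.2.2 Finset.univ ?_
    rw [Finset.card_univ, Fintype.card_fin]
    omega
  intro heq
  have hzero : ddiff X Y n = 0 := by
    show (malcevPair n X Y).1.left.toAdd - (malcevPair n X Y).2.left.toAdd = 0
    rw [show (malcevPair n X Y).1 = (malcevPair n X Y).2 from heq, sub_self]
  rw [hdn] at hzero
  have hval2 := congrFun hzero Finset.univ
  rw [Pi.smul_apply, Pi.zero_apply, smul_eq_mul] at hval2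
  have h2 : ((-1:ℤ))^n ≠ 0 := pow_ne_zero n (by norm_num)
  rcases mul_eq_zero.mp hval2 with h | h
  · exact h2 h
  · omega

end Failure

end MalcevCE
theorem exists_malcev_counterexample_level (c : ℕ) (hc : 3 ≤ c) :
    ∀ n, c ≤ n → Nonempty (MalcevCounterexampleLevel c n) := by
  intro n hn
  have hn3 : 3 ≤ n := le_trans hc hn
  exact ⟨{ G := MalcevCE.Gp n
           grp := inferInstance
           fg := MalcevCE.Gp_fg
           nilpotent := MalcevCE.Gp_nilpotent
           torsionFree := MalcevCE.Gp_torsionFree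
           A := MalcevCE.Asub n
           B := MalcevCE.Bsub n
           normalA := MalcevCE.Asub_normal
           inf_eq_bot := MalcevCE.Asub_inf_Bsub
           sup_eq_top := MalcevCE.Asub_sup_Bsub
           abelianA := MalcevCE.Asub_abelian
           abelianB := MalcevCE.Bsub_abelian
           t := MalcevCE.tgen n
           t_mem := MalcevCE.tgen_mem_Bsub
           t_gen := MalcevCE.tgen_closure
           T_satisfies_Mc := fun x hx y hy =>
             MalcevCE.T_satisfies hc x y (MalcevCE.mem_T_goodP hx) (MalcevCE.mem_T_goodP hy)
           Mn_fails_on_coset := fun e he => MalcevCE.Mn_fails hn3 e he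
           not_Mn := by
             obtain ⟨x, _, y, _, hne⟩ := MalcevCE.Mn_fails (n := n) hn3 1 le_rfl
             exact ⟨x, y, hne⟩ }⟩
end
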